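/- arXiv:2105.01086 — 8 statements merged into one kernel-verified Lean document; each statement's English description precedes it below -/
import Mathlib

section
/- In the Racah algebra R(n), for every a with 1 ≤ a ≤ n and all indices 1 ≤ i < j < k < ℓ ≤ n, the relation P_{ai} F_{jkℓ} − P_{aj} F_{ikℓ} + P_{ak} F_{ijℓ} − P_{aℓ} F_{ijk} = 0 holds. -/
/-- Generators of the Racah algebra `R(n)`. -/
inductive RacahGen (n : ℕ) : Type
  | P : Fin n → Fin n → RacahGen n
  | F : Fin n → Fin n → Fin n → RacahGen n

namespace Racah

variable (n : ℕ)

/-- The free `ℂ`-algebra on the generators. -/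
abbrev FA (n : ℕ) := FreeAlgebra ℂ (RacahGen n)

noncomputable def p (i j : Fin n) : FA n := FreeAlgebra.ι ℂ (RacahGen.P i j)
noncomputable def f (i j k : Fin n) : FA n := FreeAlgebra.ι ℂ (RacahGen.F i j k)

/-- Defining relations of the Racah algebra `R(n)`, including the index
symmetry conventions `P_{ij} = P_{ji}` and `F_{ijk} = −F_{jik} = F_{jki}`. -/
inductive Rel : FA n → FA n → Prop
  | Psymm (i j : Fin n) : Rel (p n i j) (p n j i)
  | Fswap (i j k : Fin n) : Rel (f n i j k) (-f n j i k)
  | Fcycle (i j k : Fin n) : Rel (f n i j k) (f n j k i)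
  | PiiCentral (i : Fin n) (g : RacahGen n) :
      Rel (p n i i * FreeAlgebra.ι ℂ g) (FreeAlgebra.ι ℂ g * p n i i)
  | PPcomm (i j k l : Fin n) (hij : i ≠ j) (hik : i ≠ k) (hil : i ≠ l)
      (hjk : j ≠ k) (hjl : j ≠ l) (hkl : k ≠ l) :
      Rel (p n i j * p n k l) (p n k l * p n i j)
  | PP (i j k : Fin n) (hij : i ≠ j) (hik : i ≠ k) (hjk : j ≠ k) :
      Rel (p n i j * p n j k - p n j k * p n i j) (2 * f n i j k)
  | PF (i j k : Fin n) (hij : i ≠ j) (hik : i ≠ k) (hjk : j ≠ k) :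
      Rel (p n j k * f n i j k - f n i j k * p n j k)
          (p n i k * (p n j k + p n j j) - (p n j k + p n k k) * p n i j)
  | PF2 (i j k l : Fin n) (hij : i ≠ j) (hik : i ≠ k) (hil : i ≠ l)
      (hjk : j ≠ k) (hjl : j ≠ l) (hkl : k ≠ l) :
      Rel (p n k l * f n i j k - f n i j k * p n k l)
          (p n i k * p n j l - p n i l * p n j k)
  | FF (i j k l : Fin n) (hij : i ≠ j) (hik : i ≠ k) (hil : i ≠ l)
      (hjk : j ≠ k) (hjl : j ≠ l) (hkl : k ≠ l) :
      Rel (f n i j k * f n j k l - f n j k l * f n i j k)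
          (-(f n i j l + f n i k l) * p n j k)
  | FF2 (i j k l m : Fin n) (hij : i ≠ j) (hik : i ≠ k) (hil : i ≠ l) (him : i ≠ m)
      (hjk : j ≠ k) (hjl : j ≠ l) (hjm : j ≠ m) (hkl : k ≠ l) (hkm : k ≠ m)
      (hlm : l ≠ m) :
      Rel (f n i j k * f n k l m - f n k l m * f n i j k)
          (f n i l m * p n j k - f n j l m * p n i k)

/-- The Racah algebra `R(n)`: the quotient of the free algebra by the two-sided
ideal generated by the defining relations. -/
abbrev R (n : ℕ) := RingQuot (Rel n)

/-- The generator `P_{ij}` of `R(n)`. -/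
noncomputable def P (i j : Fin n) : R n := RingQuot.mkAlgHom ℂ (Rel n) (p n i j)

/-- The generator `F_{ijk}` of `R(n)`. -/
noncomputable def F (i j k : Fin n) : R n := RingQuot.mkAlgHom ℂ (Rel n) (f n i j k)

end Racah

namespace RacahAux
open Racah
attribute [local instance] LieRing.ofAssociativeRing
variable {n : ℕ}

local notation "π" => RingQuot.mkAlgHom ℂ (Rel n)

theorem P_def (i j : Fin n) : P n i j = π (p n i j) := rfl
theorem F_def (i j k : Fin n) : F n i j k = π (f n i j k) := rfl

theorem rel {x y : FA n} (h : Rel n x y) : π x = π y :=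
  RingQuot.mkAlgHom_rel ℂ h

theorem P_symm (i j : Fin n) : P n i j = P n j i := rel (Rel.Psymm i j)

theorem F_213 (i j k : Fin n) : F n j i k = - F n i j k := by
  have := rel (Rel.Fswap i j k)
  simp only [map_neg] at this
  rw [F_def, F_def, this, neg_neg]

theorem F_231 (i j k : Fin n) : F n j k i = F n i j k := (rel (Rel.Fcycle i j k)).symm

theorem F_312 (i j k : Fin n) : F n k i j = F n i j k := by rw [← F_231 i j k, F_231]

theorem F_321 (i j k : Fin n) : F n k j i = - F n i j k := by
  rw [← F_231 k j i]; exact F_213 i j k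

theorem F_132 (i j k : Fin n) : F n i k j = - F n i j k := by
  rw [F_312 k j i]; exact F_321 i j k


theorem central (i : Fin n) (x : R n) : Commute (P n i i) x := by
  obtain ⟨y, rfl⟩ := RingQuot.mkAlgHom_surjective ℂ (Rel n) x
  induction y using FreeAlgebra.induction with
  | grade0 r =>
      rw [AlgHom.commutes]
      exact Algebra.commute_algebraMap_right r _
  | grade1 g =>
      have := rel (Rel.PiiCentral i g)
      simp only [map_mul] at this
      exact this
  | mul a b ha hb => rw [map_mul]; exact ha.mul_right hb
  | add a b ha hb => rw [map_add]; exact ha.add_right hb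

theorem two_cancel {x y : R n} (h : (2 : R n) * x = 2 * y) : x = y := by
  have h2 : (2 : R n) = algebraMap ℂ (R n) 2 := by
    rw [map_ofNat]
  rw [h2, ← Algebra.smul_def, ← Algebra.smul_def] at h
  have := congrArg (fun z => (2:ℂ)⁻¹ • z) h
  simpa [smul_smul, inv_mul_cancel₀ (two_ne_zero (α := ℂ))] using this

theorem lie_comm {x y : R n} (h : Commute x y) : ⁅x, y⁆ = 0 := by
  rw [Ring.lie_def, h.eq, sub_self]

theorem lieMul (x y z : R n) : ⁅x, y*z⁆ = ⁅x,y⁆*z + y*⁅x,z⁆ := by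
  simp only [Ring.lie_def, sub_mul, mul_sub, mul_assoc]; abel

theorem mulLie (x y z : R n) : ⁅x*y, z⁆ = x*⁅y,z⁆ + ⁅x,z⁆*y := by
  simp only [Ring.lie_def, sub_mul, mul_sub, mul_assoc]; abel

theorem lieTwo (x y : R n) : ⁅x, 2*y⁆ = 2*⁅x,y⁆ := by
  simp only [Ring.lie_def]; noncomm_ring

theorem commute_PP {i j k l : Fin n} (hik : i ≠ k) (hil : i ≠ l) (hjk : j ≠ k)
    (hjl : j ≠ l) : Commute (P n i j) (P n k l) := by
  by_cases hij : i = j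
  · subst hij; exact central i _
  · by_cases hkl : k = l
    · subst hkl; exact (central k _).symm
    · have := rel (Rel.PPcomm i j k l hij hik hil hjk hjl hkl)
      simp only [map_mul] at this
      exact this

theorem lie_PP {i j k : Fin n} (hij : i ≠ j) (hik : i ≠ k) (hjk : j ≠ k) :
    ⁅P n i j, P n j k⁆ = 2 * F n i j k := by
  have := rel (Rel.PP i j k hij hik hjk)
  simp only [map_sub, map_mul, map_ofNat] at this
  rw [Ring.lie_def]
  exact this

theorem lie_PF {i j k : Fin n} (hij : i ≠ j) (hik : i ≠ k) (hjk : j ≠ k) :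
    ⁅P n j k, F n i j k⁆ =
      P n i k * (P n j k + P n j j) - (P n j k + P n k k) * P n i j := by
  have := rel (Rel.PF i j k hij hik hjk)
  simp only [map_sub, map_mul, map_add] at this
  rw [Ring.lie_def]
  exact this

theorem lie_PF2 {i j k l : Fin n} (hij : i ≠ j) (hik : i ≠ k) (hil : i ≠ l)
    (hjk : j ≠ k) (hjl : j ≠ l) (hkl : k ≠ l) :
    ⁅P n k l, F n i j k⁆ = P n i k * P n j l - P n i l * P n j k := by
  have := rel (Rel.PF2 i j k l hij hik hil hjk hjl hkl)
  simp only [map_sub, map_mul] at this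
  rw [Ring.lie_def]
  exact this

theorem lie_FF {i j k l : Fin n} (hij : i ≠ j) (hik : i ≠ k) (hil : i ≠ l)
    (hjk : j ≠ k) (hjl : j ≠ l) (hkl : k ≠ l) :
    ⁅F n i j k, F n j k l⁆ = -(F n i j l + F n i k l) * P n j k := by
  have := rel (Rel.FF i j k l hij hik hil hjk hjl hkl)
  simp only [map_sub, map_mul, map_add, map_neg] at this
  rw [Ring.lie_def]
  exact this


theorem negMul' (x y : R n) : -x * y = -(x * y) := neg_mul x y
theorem mulNeg' (x y : R n) : x * -y = -(x * y) := mul_neg x y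
theorem negNeg' (x : R n) : - -x = x := neg_neg x
theorem negSub' (x y : R n) : -(x - y) = y - x := neg_sub x y
theorem negAdd' (x y : R n) : -(x + y) = -x - y := by rw [neg_add, sub_eq_add_neg]

theorem lieCommZero {x y : R n} (h : Commute x y) : ⁅x, y⁆ = 0 := by
  rw [Ring.lie_def, h.eq, sub_self]

theorem lie1 {a s u v : Fin n} (has : a ≠ s) (hau : a ≠ u) (hav : a ≠ v)
    (hsu : s ≠ u) (hsv : s ≠ v) (huv : u ≠ v) :
    ⁅P n a s, F n s u v⁆ = P n s u * P n a v - P n a u * P n s v := by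
  rw [P_symm a s, ← F_231 s u v,
    lie_PF2 huv hsu.symm hau.symm hsv.symm hav.symm has.symm,
    P_symm u s, P_symm v a, P_symm u a, P_symm v s]

theorem lie2 {a s u v : Fin n} (has : a ≠ s) (hau : a ≠ u) (hav : a ≠ v)
    (hsu : s ≠ u) (hsv : s ≠ v) (huv : u ≠ v) :
    ⁅P n a s, F n u s v⁆ = P n v s * P n u a - P n v a * P n u s := by
  rw [P_symm a s, ← F_312 u s v,
    lie_PF2 huv.symm hsv.symm hav.symm hsu.symm hau.symm has.symm]

theorem commute_PF {v w x y z : Fin n} (hxy : x ≠ y) (hxz : x ≠ z) (hyz : y ≠ z)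
    (hvx : v ≠ x) (hvy : v ≠ y) (hvz : v ≠ z)
    (hwx : w ≠ x) (hwy : w ≠ y) (hwz : w ≠ z) :
    Commute (P n v w) (F n x y z) := by
  have h1 : ⁅P n v w, P n x y⁆ = 0 := lieCommZero (commute_PP hvx hvy hwx hwy)
  have h2 : ⁅P n v w, P n y z⁆ = 0 := lieCommZero (commute_PP hvy hvz hwy hwz)
  have h3 : ⁅P n v w, 2 * F n x y z⁆ = 0 := by
    rw [← lie_PP hxy hxz hyz, leibniz_lie, h1, h2, zero_lie, lie_zero, add_zero]
  rw [lieTwo] at h3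
  have h4 : ⁅P n v w, F n x y z⁆ = 0 := two_cancel (by rw [h3, mul_zero])
  rw [Ring.lie_def, sub_eq_zero] at h4
  exact h4


theorem coreE {a i j k l : Fin n} (hai : a ≠ i) (haj : a ≠ j) (hak : a ≠ k)
    (hal : a ≠ l) (hij : i ≠ j) (hik : i ≠ k) (hil : i ≠ l) (hjk : j ≠ k)
    (hjl : j ≠ l) (hkl : k ≠ l) :
    F n a j k * P n i l - F n a i k * P n j l + F n a i j * P n k l
      - F n i j k * P n a l = 0 := by
  have hJ := leibniz_lie (P n a i) (F n i j k) (F n j k l)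
  rw [lieCommZero (commute_PF hjk hjl hkl haj hak hal hij hik hil), lie_zero,
    add_zero, lie_FF hij hik hil hjk hjl hkl,
    lie1 hai haj hak hij hik hjk,
    neg_mul (F n i j l + F n i k l) (P n j k), lie_neg] at hJ
  simp only [sub_lie, add_lie, lie_add, lie_sub, mulLie, lieMul,
    lieCommZero (commute_PP haj hak hij hik), mul_zero, add_zero,
    lie1 hai haj hal hij hil hjl,
    lie1 hai hak hal hik hil hkl,
    lie2 hak haj hal hjk.symm hkl hjl,
    lie1 hij hik hil hjk hjl hkl,
    lie2 hik hij hil hjk.symm hkl hjl,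
    lie1 haj hak hal hjk hjl hkl] at hJ
  simp only [P_symm l k, P_symm j a, P_symm l a, P_symm j i, P_symm l i,
    sub_mul, add_mul, mul_sub, mul_add, neg_mul, mul_neg, neg_neg, neg_add,
    neg_sub, mul_assoc] at hJ
  rw [(commute_PP hak.symm hjk.symm hal.symm hjl.symm).eq,
    (commute_PP hai.symm hik hal.symm hkl.symm).eq,
    (commute_PP haj.symm hjk hal.symm hkl.symm).eq,
    (commute_PP hik.symm hjk.symm hil.symm hjl.symm).eq,
    (commute_PP hai hak hil.symm hkl.symm).eq,
    (commute_PP hij.symm hjk hil.symm hkl.symm).eq,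
    (commute_PP haj hak hjl.symm hkl.symm).eq,
    (commute_PP hij hik hjl.symm hkl.symm).eq] at hJ
  have e1 : (2 : R n) * F n a j k = ⁅P n j k, P n k a⁆ := by
    rw [lie_PP hjk haj.symm hak.symm, F_312 j k a]
  have e2 : (2 : R n) * F n a i k = ⁅P n i k, P n k a⁆ := by
    rw [lie_PP hik hai.symm hak.symm, F_312 i k a]
  have e3 : (2 : R n) * F n a i j = ⁅P n i j, P n j a⁆ := by
    rw [lie_PP hij hai.symm haj.symm, F_312 i j a]
  have e4 : (2 : R n) * F n i j k = -⁅P n i k, P n k j⁆ := by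
    rw [lie_PP hik hij hjk.symm, F_132 i j k]
    simp only [mulNeg', negNeg']
  refine two_cancel ?_
  rw [mul_zero]
  simp only [mul_sub, mul_add]
  rw [← mul_assoc, ← mul_assoc, ← mul_assoc, ← mul_assoc, e1, e2, e3, e4]
  have h0 := sub_eq_zero_of_eq hJ.symm
  rw [← h0]
  simp only [Ring.lie_def, P_symm k a, P_symm k j, P_symm j a, negMul', mulNeg',
    negNeg', negSub', negAdd', sub_mul, add_mul, mul_assoc]
  abel


theorem coreD {x y z w : Fin n} (hxy : x ≠ y) (hxz : x ≠ z) (hxw : x ≠ w)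
    (hyz : y ≠ z) (hyw : y ≠ w) (hzw : z ≠ w) :
    P n x x * F n y z w - P n x y * F n x z w + P n x z * F n x y w
      - P n x w * F n x y z = 0 := by
  have t1 : ⁅F n y x z, P n x z⁆
      = -(P n y z * (P n x z + P n x x) - (P n x z + P n z z) * P n y x) := by
    rw [← lie_PF hxy.symm hyz hxz, lie_skew]
  have t2 : ⁅F n y x z, P n z w⁆ = -(P n y z * P n x w - P n y w * P n x z) := by
    rw [← lie_PF2 hxy.symm hyz hyw hxz hxw hzw, lie_skew]
  have hD : F n y z w * P n x x
      = F n x z w * P n x y + F n x y z * P n x w - F n x y w * P n x z := by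
    have hJ := leibniz_lie (F n y x z) (P n x z) (P n z w)
    rw [lie_PP hxz hxw hzw, lieTwo, lie_FF hxy.symm hyz hyw hxz hxw hzw,
      t1, t2] at hJ
    simp only [neg_lie, lie_neg, sub_lie, add_lie, lie_add, lie_sub, mulLie,
      lieMul, lie_self,
      lie_PP hxz hxw hzw,
      lieCommZero (central x (P n z w)),
      lie_PP hyz hyw hzw,
      lieCommZero (central z (P n z w)),
      lieCommZero (commute_PP hyz hyw hxz hxw),
      lieCommZero (commute_PP hxz hxw hyz hyw),
      lieCommZero (commute_PP hxy hxw hyz.symm hzw),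
      F_213 x y w, P_symm y x,
      mul_zero, zero_mul, add_zero, zero_add, sub_zero, zero_sub, neg_zero] at hJ
    rw [show ⁅P n x z, P n y z⁆ = 2 * -F n x y z by
        rw [P_symm y z, lie_PP hxz hxy hyz.symm, F_132],
      show ⁅P n x z, P n x w⁆ = 2 * -F n x z w by
        rw [P_symm x z, lie_PP hxz.symm hzw hxw, F_213]] at hJ
    refine two_cancel ?_
    rw [← sub_eq_zero]
    have h0 := sub_eq_zero_of_eq hJ
    rw [← h0]
    simp only [two_mul, mul_add, add_mul, mul_sub, sub_mul, negMul', mulNeg',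
      negNeg', negSub', negAdd', mul_assoc]
    abel
  have b1 : ⁅P n x y, F n x z w⁆ = P n x z * P n y w - P n y z * P n x w := by
    rw [P_symm x y, lie1 hxy.symm hyz hyw hxz hxw hzw]
  have b2 : ⁅P n x z, F n x y w⁆ = P n x y * P n z w - P n y z * P n x w := by
    rw [P_symm x z, lie1 hxz.symm hyz.symm hzw hxy hxw hyw, P_symm z y]
  have b3 : ⁅P n x w, F n x y z⁆ = P n x y * P n z w - P n y w * P n x z := by
    rw [P_symm x w, lie1 hxw.symm hyw.symm hzw.symm hxy hxz hyz, P_symm w z,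
      P_symm w y]
  have mulEq : ∀ u v : R n, u * v = v * u + ⁅u, v⁆ := fun u v => by
    rw [Ring.lie_def]; abel
  rw [(central x (F n y z w)).eq, mulEq (P n x y) (F n x z w),
    mulEq (P n x z) (F n x y w), mulEq (P n x w) (F n x y z), b1, b2, b3, hD,
    (commute_PP hxy.symm hyz hxw.symm hzw.symm).eq]
  abel

end RacahAux

open Racah in
/-- In `R(n)`, for every `a` and all `i < j < k < ℓ`,
`P_{ai}F_{jkℓ} − P_{aj}F_{ikℓ} + P_{ak}F_{ijℓ} − P_{aℓ}F_{ijk} = 0`. -/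
theorem PF_quadratic_identity (n : ℕ) (hn : 3 ≤ n) (a i j k l : Fin n)
    (hij : i < j) (hjk : j < k) (hkl : k < l) :
    P n a i * F n j k l - P n a j * F n i k l
      + P n a k * F n i j l - P n a l * F n i j k = 0 := by
  have hij' : i ≠ j := hij.ne
  have hik' : i ≠ k := (hij.trans hjk).ne
  have hil' : i ≠ l := ((hij.trans hjk).trans hkl).ne
  have hjk' : j ≠ k := hjk.ne
  have hjl' : j ≠ l := (hjk.trans hkl).ne
  have hkl' : k ≠ l := hkl.ne
  rcases eq_or_ne a i with rfl | hai
  · exact RacahAux.coreD hij' hik' hil' hjk' hjl' hkl'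
  rcases eq_or_ne a j with rfl | haj
  · have hD := RacahAux.coreD (x := a) (y := i) (z := k) (w := l)
      hij'.symm hjk' hjl' hik' hil' hkl'
    rw [RacahAux.F_213 i a l, RacahAux.F_213 i a k] at hD
    simp only [RacahAux.mulNeg', RacahAux.negNeg'] at hD
    have h0 := neg_eq_zero.mpr hD
    rw [← h0]
    abel
  rcases eq_or_ne a k with rfl | hak
  · have hD := RacahAux.coreD (x := a) (y := i) (z := j) (w := l)
      hik'.symm hjk'.symm hkl' hij' hil' hjl'
    rw [RacahAux.F_213 j a l, RacahAux.F_213 i a l, RacahAux.F_312 i j a] at hD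
    simp only [RacahAux.mulNeg', RacahAux.negNeg'] at hD
    rw [← hD]
    abel
  rcases eq_or_ne a l with rfl | hal
  · have hD := RacahAux.coreD (x := a) (y := i) (z := j) (w := k)
      hil'.symm hjl'.symm hkl'.symm hij' hik' hjk'
    rw [RacahAux.F_312 j k a, RacahAux.F_312 i k a, RacahAux.F_312 i j a] at hD
    have h0 := neg_eq_zero.mpr hD
    rw [← h0]
    abel
  · have hE := RacahAux.coreE (a := i) (i := j) (j := k) (k := l) (l := a)
      hij' hik' hil' hai.symm hjk' hjl' haj.symm hkl' hak.symm hal.symm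
    rw [RacahAux.P_symm j a, RacahAux.P_symm k a, RacahAux.P_symm l a,
      RacahAux.P_symm i a] at hE
    rw [(RacahAux.commute_PF hjk' hjl' hkl' haj hak hal hij' hik' hil').eq,
      (RacahAux.commute_PF hik' hil' hkl' hai hak hal hij'.symm hjk' hjl').eq,
      (RacahAux.commute_PF hij' hil' hjl' hai haj hal hik'.symm hjk'.symm hkl').eq,
      (RacahAux.commute_PF hij' hik' hjk' hai haj hak hil'.symm hjl'.symm hkl'.symm).eq]
    have h0 := neg_eq_zero.mpr hE
    rw [← h0]
    abel
end

section
/- In the Racah algebra R(n), the element Q_n = Σ_{1 ≤ i < j ≤ n} P_{ij} is central, i.e., Q_n commutes with every element of R(n). -/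
namespace Racah

variable {n : ℕ}

private lemma rel_eq {a b : FA n} (h : Rel n a b) :
    RingQuot.mkAlgHom ℂ (Rel n) a = RingQuot.mkAlgHom ℂ (Rel n) b :=
  RingQuot.mkAlgHom_rel ℂ h

lemma Psymm' (i j : Fin n) : P n i j = P n j i := rel_eq (Rel.Psymm i j)

lemma Fswap' (i j k : Fin n) : F n i j k = -F n j i k := by
  simpa [F, map_neg] using rel_eq (Rel.Fswap i j k)

lemma Fcycle' (i j k : Fin n) : F n i j k = F n j k i := rel_eq (Rel.Fcycle i j k)

lemma Fswap23 (i j k : Fin n) : F n i j k = -F n i k j := by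
  rw [Fcycle' i j k, Fcycle' i k j, Fswap' k j i, neg_neg]

lemma Pii_P (i k l : Fin n) : P n i i * P n k l = P n k l * P n i i := by
  simpa [P, p, map_mul] using rel_eq (Rel.PiiCentral i (RacahGen.P k l))

lemma PP' (i j k : Fin n) (hij : i ≠ j) (hik : i ≠ k) (hjk : j ≠ k) :
    P n i j * P n j k - P n j k * P n i j = 2 * F n i j k := by
  simpa [P, F, map_mul, map_sub, map_ofNat] using rel_eq (Rel.PP i j k hij hik hjk)

lemma PPcomm' (i j k l : Fin n) (hij : i ≠ j) (hik : i ≠ k) (hil : i ≠ l)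
    (hjk : j ≠ k) (hjl : j ≠ l) (hkl : k ≠ l) :
    P n i j * P n k l = P n k l * P n i j := by
  simpa [P, map_mul] using rel_eq (Rel.PPcomm i j k l hij hik hil hjk hjl hkl)

lemma PPc (a k l : Fin n) (hak : a ≠ k) (hal : a ≠ l) (hkl : k ≠ l) :
    P n a k * P n k l - P n k l * P n a k = 2 * F n a k l :=
  PP' a k l hak hal hkl

lemma PPc2 (a k l : Fin n) (hak : a ≠ k) (hal : a ≠ l) (hkl : k ≠ l) :
    P n a l * P n k l - P n k l * P n a l = -(2 * F n a k l) := by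
  have h := PP' a l k hal hak (Ne.symm hkl)
  rw [Psymm' l k] at h
  rw [h, Fswap23 a l k]
  exact mul_neg 2 (F n a k l)

lemma half_zero {a : R n} (h : a + a = 0) : a = 0 := by
  have h2 : (2 : ℂ) • a = 0 := by rw [two_smul]; exact h
  have h3 : a = ((2 : ℂ)⁻¹ * 2) • a := by norm_num
  rw [h3, mul_smul, h2, smul_zero]

lemma key (k l : Fin n) (hkl : k ≠ l) (i j : Fin n) :
    P n (Equiv.swap k l i) (Equiv.swap k l j) * P n k l
      - P n k l * P n (Equiv.swap k l i) (Equiv.swap k l j)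
      = -(P n i j * P n k l - P n k l * P n i j) := by
  rcases eq_or_ne i j with rfl | hij
  · rw [Pii_P, Pii_P, sub_self, sub_self, neg_zero]
  rcases eq_or_ne i k with rfl | hik
  · -- i = k
    have hjk : j ≠ i := hij.symm
    rcases eq_or_ne j l with rfl | hjl
    · rw [Equiv.swap_apply_left, Equiv.swap_apply_right, Psymm' j i]
      simp
    · rw [Equiv.swap_apply_left, Equiv.swap_apply_of_ne_of_ne hjk hjl,
        Psymm' l j, Psymm' i j, PPc2 j i l hjk hjl hkl, PPc j i l hjk hjl hkl]
  rcases eq_or_ne i l with rfl | hil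
  · -- i = l
    have hjl : j ≠ i := hij.symm
    rcases eq_or_ne j k with rfl | hjk
    · rw [Equiv.swap_apply_right, Equiv.swap_apply_left, Psymm' i j]
      simp
    · rw [Equiv.swap_apply_right, Equiv.swap_apply_of_ne_of_ne hjk hjl,
        Psymm' k j, Psymm' i j, PPc j k i hjk hjl hkl, PPc2 j k i hjk hjl hkl, neg_neg]
  -- i ∉ {k, l}
  rw [Equiv.swap_apply_of_ne_of_ne hik hil]
  rcases eq_or_ne j k with rfl | hjk
  · rw [Equiv.swap_apply_left, PPc2 i j l hij hil hkl, PPc i j l hij hil hkl]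
  rcases eq_or_ne j l with rfl | hjl
  · rw [Equiv.swap_apply_right, PPc i k j hik hil hkl, PPc2 i k j hik hil hkl, neg_neg]
  · rw [Equiv.swap_apply_of_ne_of_ne hjk hjl,
      PPcomm' i j k l hij hik hil hjk hjl hkl, sub_self, neg_zero]

/-- Abbreviation for `Q_n`. -/
noncomputable def QQ (n : ℕ) : R n :=
  ∑ q ∈ Finset.univ.filter (fun q : Fin n × Fin n => q.1 < q.2), P n q.1 q.2

lemma Q_comm_P (k l : Fin n) : QQ n * P n k l = P n k l * QQ n := by
  unfold QQ
  rcases eq_or_ne k l with rfl | hkl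
  · rw [Finset.sum_mul, Finset.mul_sum]
    exact Finset.sum_congr rfl fun q _ => (Pii_P k q.1 q.2).symm
  · set c : Fin n × Fin n → R n :=
      fun q => P n q.1 q.2 * P n k l - P n k l * P n q.1 q.2 with hc
    have hS : ∑ q ∈ Finset.univ.filter (fun q : Fin n × Fin n => q.1 < q.2), c q = 0 := by
      have hkey : ∀ q : Fin n × Fin n,
          c (Equiv.swap k l q.1, Equiv.swap k l q.2) = -c q :=
        fun q => key k l hkl q.1 q.2
      have htot : ∑ q : Fin n × Fin n, c q = 0 := by
        have h1 : ∑ q : Fin n × Fin n, c q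
            = ∑ q : Fin n × Fin n, c (((Equiv.swap k l).prodCongr (Equiv.swap k l)) q) :=
          (Equiv.sum_comp ((Equiv.swap k l).prodCongr (Equiv.swap k l)) c).symm
        have h2 : ∑ q : Fin n × Fin n, c (((Equiv.swap k l).prodCongr (Equiv.swap k l)) q)
            = -∑ q : Fin n × Fin n, c q := by
          rw [← Finset.sum_neg_distrib]
          exact Finset.sum_congr rfl fun q _ => hkey q
        exact half_zero (eq_neg_iff_add_eq_zero.mp (h1.trans h2))
      have hsplit := Finset.sum_filter_add_sum_filter_not Finset.univ
        (fun q : Fin n × Fin n => q.1 < q.2) c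
      have hno : ∑ q ∈ Finset.univ.filter (fun q : Fin n × Fin n => ¬ q.1 < q.2), c q
          = ∑ q ∈ Finset.univ.filter (fun q : Fin n × Fin n => q.1 < q.2), c q := by
        rw [← Finset.sum_filter_add_sum_filter_not
          (Finset.univ.filter (fun q : Fin n × Fin n => ¬ q.1 < q.2))
          (fun q => q.1 = q.2) c]
        have hd : ∑ q ∈ (Finset.univ.filter
            (fun q : Fin n × Fin n => ¬ q.1 < q.2)).filter (fun q => q.1 = q.2), c q = 0 := by
          apply Finset.sum_eq_zero
          intro q hq
          have hqe : q.1 = q.2 := (Finset.mem_filter.mp hq).2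
          simp only [hc]
          rw [hqe, Pii_P, sub_self]
        rw [hd, zero_add]
        refine Finset.sum_nbij' (fun q => Prod.swap q) (fun q => Prod.swap q) ?_ ?_ ?_ ?_ ?_
        · intro a ha
          simp only [Finset.mem_filter, Finset.mem_univ, true_and, Prod.fst_swap,
            Prod.snd_swap] at ha ⊢
          exact lt_of_le_of_ne (not_lt.mp ha.1) (Ne.symm ha.2)
        · intro a ha
          simp only [Finset.mem_filter, Finset.mem_univ, true_and, Prod.fst_swap,
            Prod.snd_swap] at ha ⊢
          exact ⟨not_lt.mpr (le_of_lt ha), ne_of_gt ha⟩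
        · intro a _; rfl
        · intro a _; rfl
        · intro a _
          simp only [hc, Prod.fst_swap, Prod.snd_swap]
          rw [Psymm' a.2 a.1]
      rw [hno, htot] at hsplit
      exact half_zero hsplit
    have hfin : (∑ q ∈ Finset.univ.filter (fun q : Fin n × Fin n => q.1 < q.2), P n q.1 q.2)
          * P n k l
        - P n k l * ∑ q ∈ Finset.univ.filter (fun q : Fin n × Fin n => q.1 < q.2), P n q.1 q.2
        = ∑ q ∈ Finset.univ.filter (fun q : Fin n × Fin n => q.1 < q.2), c q := by
      rw [Finset.sum_mul, Finset.mul_sum, ← Finset.sum_sub_distrib]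
    exact sub_eq_zero.mp (hfin.trans hS)

lemma Fzero1 (i k : Fin n) : F n i i k = 0 :=
  half_zero (eq_neg_iff_add_eq_zero.mp (Fswap' i i k))

lemma Fzero2 (i j : Fin n) : F n i j i = 0 := by
  rw [Fcycle' i j i]
  exact half_zero (eq_neg_iff_add_eq_zero.mp (Fswap23 j i i))

lemma Fzero3 (i j : Fin n) : F n i j j = 0 := by
  rw [Fcycle' i j j]
  exact Fzero1 j i

lemma Q_comm_F (i j k : Fin n) : QQ n * F n i j k = F n i j k * QQ n := by
  rcases eq_or_ne i j with rfl | hij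
  · rw [Fzero1, mul_zero, zero_mul]
  rcases eq_or_ne i k with rfl | hik
  · rw [Fzero2, mul_zero, zero_mul]
  rcases eq_or_ne j k with rfl | hjk
  · rw [Fzero3, mul_zero, zero_mul]
  · have h2 : 2 * F n i j k = P n i j * P n j k - P n j k * P n i j :=
      (PP' i j k hij hik hjk).symm
    have e1 : QQ n * (P n i j * P n j k) = (P n i j * P n j k) * QQ n := by
      rw [← mul_assoc, Q_comm_P i j, mul_assoc, Q_comm_P j k, ← mul_assoc]
    have e2 : QQ n * (P n j k * P n i j) = (P n j k * P n i j) * QQ n := by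
      rw [← mul_assoc, Q_comm_P j k, mul_assoc, Q_comm_P i j, ← mul_assoc]
    have hcomm : QQ n * (2 * F n i j k) = (2 * F n i j k) * QQ n := by
      rw [h2, mul_sub, sub_mul, e1, e2]
    rw [two_mul, mul_add, add_mul] at hcomm
    have h3 : (QQ n * F n i j k - F n i j k * QQ n)
        + (QQ n * F n i j k - F n i j k * QQ n) = 0 := by
      rw [sub_add_sub_comm, hcomm, sub_self]
    exact sub_eq_zero.mp (half_zero h3)

lemma Q_central (x : R n) : QQ n * x = x * QQ n := by
  obtain ⟨y, rfl⟩ := RingQuot.mkAlgHom_surjective ℂ (Rel n) x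
  induction y using FreeAlgebra.induction with
  | grade0 r =>
      rw [AlgHom.commutes]
      exact (Algebra.commutes r (QQ n)).symm
  | grade1 g =>
      cases g with
      | P i j => exact Q_comm_P i j
      | F i j k => exact Q_comm_F i j k
  | mul a b ha hb =>
      rw [map_mul, ← mul_assoc, ha, mul_assoc, hb, ← mul_assoc]
  | add a b ha hb =>
      rw [map_add, mul_add, add_mul, ha, hb]

end Racah

open Racah in
/-- In `R(n)`, the element `Q_n = Σ_{1 ≤ i < j ≤ n} P_{ij}` is
central. -/
theorem Qn_central (n : ℕ) (hn : 3 ≤ n) :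
    ∀ x : Racah.R n,
      (∑ q ∈ Finset.univ.filter (fun q : Fin n × Fin n => q.1 < q.2), P n q.1 q.2) * x
        = x * ∑ q ∈ Finset.univ.filter (fun q : Fin n × Fin n => q.1 < q.2), P n q.1 q.2 := by
  intro x
  exact Racah.Q_central x
end

section
/- For every integer r ≥ 0, the following identity of formal power series over ℤ holds: (1 − t²)^{3(r+1)} · Σ_{k ≥ 0} (−1)^k ã_k t^k = (1 − t)^{r+2} (1 + t)^r · Σ_{k=0}^{2r} (−1)^k a_k t^k, where ã_{2k} = C(r+k+1, k)², ã_{2k+1} = C(r+k+1, k)·C(r+k+2, k+1), a_{2k} = C(r, k)², and a_{2k+1} = C(r, k)·C(r, k+1). -/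
open PowerSeries Finset

namespace HSIproof

local notation "XX" => (PowerSeries.X : ℤ⟦X⟧)
local notation "CC" => (PowerSeries.C (R := ℤ))

lemma Dh_apply_pre : True := trivial


/-- alternating-sum binomial identity helper -/
def S (c d n : ℕ) : ℤ := ∑ j ∈ range (n+1), (-1)^j * (n.choose j : ℤ) * ((c+j).choose d : ℤ)

lemma S_rec (c d n : ℕ) : S c d (n+1) = S c d n - S (c+1) d n := by
  have e1 : S c d (n+1)
      = ∑ i ∈ range (n+1), (-1:ℤ)^(i+1) * ((n+1).choose (i+1) : ℤ) * ((c+(i+1)).choose d : ℤ)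
        + ((c+0).choose d : ℤ) := by
    rw [S, Finset.sum_range_succ']
    simp
  have e2 : ∀ i, ((n+1).choose (i+1) : ℤ) = (n.choose i : ℤ) + (n.choose (i+1) : ℤ) := by
    intro i; exact_mod_cast congrArg (Nat.cast (R := ℤ)) (Nat.choose_succ_succ' n i)
  have e3 : S c d (n+1)
      = (∑ i ∈ range (n+1), -((-1:ℤ)^i * (n.choose i : ℤ) * (((c+1)+i).choose d : ℤ)))
        + ((∑ i ∈ range (n+1), (-1:ℤ)^(i+1) * (n.choose (i+1) : ℤ) * ((c+(i+1)).choose d : ℤ))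
          + ((c+0).choose d : ℤ)) := by
    rw [e1]
    have esum : ∑ i ∈ range (n+1), (-1:ℤ)^(i+1) * ((n+1).choose (i+1) : ℤ) * ((c+(i+1)).choose d : ℤ)
        = ∑ i ∈ range (n+1), (-((-1:ℤ)^i * (n.choose i : ℤ) * (((c+1)+i).choose d : ℤ))
            + (-1:ℤ)^(i+1) * (n.choose (i+1) : ℤ) * ((c+(i+1)).choose d : ℤ)) := by
      apply Finset.sum_congr rfl
      intro i _
      rw [e2 i, show (c+1)+i = c+(i+1) by ring]
      ring
    rw [esum, Finset.sum_add_distrib, add_assoc]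
  have e4 : (∑ i ∈ range (n+1), (-1:ℤ)^(i+1) * (n.choose (i+1) : ℤ) * ((c+(i+1)).choose d : ℤ))
      = ∑ i ∈ range n, (-1:ℤ)^(i+1) * (n.choose (i+1) : ℤ) * ((c+(i+1)).choose d : ℤ) := by
    rw [Finset.sum_range_succ, Nat.choose_succ_self]
    simp
  have e5 : (∑ i ∈ range n, (-1:ℤ)^(i+1) * (n.choose (i+1) : ℤ) * ((c+(i+1)).choose d : ℤ))
        + ((c+0).choose d : ℤ) = S c d n := by
    rw [S, Finset.sum_range_succ']
    simp
  rw [e3, e4, e5]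
  simp only [S]
  rw [Finset.sum_neg_distrib]
  ring

lemma S_eq_of_le {d n : ℕ} (h : n ≤ d) (c : ℕ) : S c d n = (-1)^n * (c.choose (d - n) : ℤ) := by
  induction n generalizing c with
  | zero => simp [S]
  | succ n ih =>
    have hn : n ≤ d := Nat.le_of_succ_le h
    rw [S_rec, ih hn, ih hn]
    have hdn : 1 ≤ d - n := by omega
    have pas : ((c+1).choose (d - n) : ℤ) = (c.choose (d-n) : ℤ) + (c.choose (d-n-1) : ℤ) := by
      have := Nat.choose_succ_succ' c (d - n - 1)
      rw [show d - n - 1 + 1 = d - n by omega] at this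
      push_cast [this]
      ring
    rw [pas, show d - (n+1) = d - n - 1 by omega]
    ring

lemma S_eq_zero {d n : ℕ} (h : d < n) (c : ℕ) : S c d n = 0 := by
  induction n generalizing c with
  | zero => omega
  | succ n ih =>
    rcases Nat.lt_or_ge d n with h' | h'
    · rw [S_rec, ih h', ih h']; ring
    · have hdn : d = n := by omega
      subst hdn
      rw [S_rec, S_eq_of_le le_rfl, S_eq_of_le le_rfl]
      simp

/-- trinomial revision -/
lemma trinom (a k j : ℕ) (h : j ≤ k) :
    (a+k).choose k * k.choose j = (a+j).choose j * (a+k).choose (k - j) := by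
  have h1 : (a+k).choose (a+j) * (a+j).choose a = (a+k).choose a * k.choose j := by
    have := Nat.choose_mul (n := a + k) (show a ≤ a + j by omega)
    rw [this, show a + k - a = k by omega, show a + j - a = j by omega]
  have s1 : (a+k).choose (a+j) = (a+k).choose (k-j) := by
    rw [← Nat.choose_symm (show a + j ≤ a + k by omega), show a + k - (a+j) = k - j by omega]
  have s2 : (a+j).choose a = (a+j).choose j := by
    rw [← Nat.choose_symm (show a ≤ a + j by omega), show a + j - a = j by omega]
  have s3 : (a+k).choose a = (a+k).choose k := by
    rw [← Nat.choose_symm (show a ≤ a + k by omega), show a + k - a = k by omega]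
  rw [s1, s2, s3] at h1
  rw [← h1]
  exact Nat.mul_comm _ _




lemma coeff_one_sub_pow (m i : ℕ) :
    (PowerSeries.coeff (R := ℤ) i) ((1 - XX)^m) = (-1)^i * (m.choose i : ℤ) := by
  have h : ((1:ℤ⟦X⟧) - XX)^m = ∑ j ∈ range (m+1), CC ((-1)^j * (m.choose j : ℤ)) * XX^j := by
    rw [sub_eq_add_neg, add_comm, add_pow]
    apply Finset.sum_congr rfl
    intro j _
    rw [neg_pow, one_pow, mul_one, map_mul, map_pow, map_neg, map_one, map_natCast]
    ring
  rw [h, map_sum]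
  simp only [PowerSeries.coeff_C_mul, PowerSeries.coeff_X_pow, mul_ite, mul_one, mul_zero]
  rw [Finset.sum_ite_eq (range (m+1)) i (fun j => (-1:ℤ)^j * (m.choose j : ℤ))]
  split_ifs with hi
  · rfl
  · rw [Finset.mem_range, not_lt] at hi
    rw [Nat.choose_eq_zero_of_lt (by omega)]
    ring

lemma coeff_sum_CX (c : ℕ → ℤ) (N n : ℕ) :
    (PowerSeries.coeff (R := ℤ) n) (∑ k ∈ range N, CC (c k) * XX^k) = if n < N then c n else 0 := by
  rw [map_sum]
  simp only [PowerSeries.coeff_C_mul, PowerSeries.coeff_X_pow, mul_ite, mul_one, mul_zero]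
  rw [Finset.sum_ite_eq (range N) n c]
  simp [Finset.mem_range]

lemma coeff_sum_CX2 (c : ℕ → ℤ) (N n : ℕ) :
    (PowerSeries.coeff (R := ℤ) n) (∑ k ∈ range N, CC (c k) * XX^(2*k))
      = if n % 2 = 0 ∧ n / 2 < N then c (n / 2) else 0 := by
  rw [map_sum]
  simp only [PowerSeries.coeff_C_mul, PowerSeries.coeff_X_pow, mul_ite, mul_one, mul_zero]
  split_ifs with h
  · obtain ⟨h1, h2⟩ := h
    have : ∀ k, (n = 2 * k) ↔ (k = n / 2) := by omega
    calc (∑ k ∈ range N, if n = 2*k then c k else 0)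
        = ∑ k ∈ range N, if k = n / 2 then c k else 0 := by
          apply Finset.sum_congr rfl; intro k _; simp only [this k]
      _ = c (n/2) := by
          rw [Finset.sum_ite_eq' (range N) (n/2) c]
          simp [Finset.mem_range, h2]
  · apply Finset.sum_eq_zero
    intro k hk
    rw [Finset.mem_range] at hk
    rw [if_neg (by omega)]

/-- the inverse power series of (1-X)^(m+1) -/
lemma inv_one_sub (m : ℕ) :
    ((1:ℤ⟦X⟧) - XX)^(m+1) * PowerSeries.mk (fun k => ((m+k).choose k : ℤ)) = 1 := by
  have h := (PowerSeries.invOneSubPow ℤ (m+1)).inv_val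
  rw [PowerSeries.invOneSubPow_inv_eq_one_sub_pow] at h
  rw [show (PowerSeries.mk (fun k => ((m+k).choose k : ℤ)))
      = (PowerSeries.invOneSubPow ℤ (m+1)).val by
    rw [PowerSeries.invOneSubPow_val_succ_eq_mk_add_choose]
    apply PowerSeries.ext; intro n
    simp only [PowerSeries.coeff_mk]
    exact congrArg (Nat.cast (R := ℤ)) Nat.choose_symm_add.symm]
  exact h

/-- doubling: substitute X ↦ X², as a function -/
noncomputable def D (f : ℤ⟦X⟧) : ℤ⟦X⟧ :=
  PowerSeries.mk (fun n => if n % 2 = 0 then (PowerSeries.coeff (R := ℤ) (n / 2)) f else 0)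

lemma coeff_D_even (f : ℤ⟦X⟧) (m : ℕ) :
    (PowerSeries.coeff (R := ℤ) (2*m)) (D f) = (PowerSeries.coeff (R := ℤ) m) f := by
  simp [D, PowerSeries.coeff_mk, Nat.mul_div_cancel_left, Nat.mul_mod_right]
lemma coeff_D_odd (f : ℤ⟦X⟧) (m : ℕ) :
    (PowerSeries.coeff (R := ℤ) (2*m+1)) (D f) = 0 := by
  simp [D, PowerSeries.coeff_mk, Nat.add_mul_mod_self_left]

lemma sum_range_double (M : ℕ) (h : ℕ → ℤ) (hodd : ∀ k, h (2*k+1) = 0) :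
    ∑ k ∈ range (2*M+1), h k = ∑ i ∈ range (M+1), h (2*i) := by
  induction M with
  | zero => simp
  | succ M ih =>
    rw [show 2*(M+1)+1 = (2*M+1) + 1 + 1 by ring, Finset.sum_range_succ, Finset.sum_range_succ,
      ih, hodd M, Finset.sum_range_succ (fun i => h (2*i)) (M+1),
      show 2*M+1+1 = 2*(M+1) by ring]
    ring

lemma D_mul (f g : ℤ⟦X⟧) : D (f * g) = D f * D g := by
  apply PowerSeries.ext
  intro n
  rw [PowerSeries.coeff_mul, Finset.Nat.sum_antidiagonal_eq_sum_range_succ_mk]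
  rcases Nat.even_or_odd n with ⟨m, hm⟩ | ⟨m, hm⟩
  · subst hm
    rw [show m + m = 2*m by ring] at *
    rw [coeff_D_even, PowerSeries.coeff_mul, Finset.Nat.sum_antidiagonal_eq_sum_range_succ_mk]
    rw [sum_range_double m (fun k => (PowerSeries.coeff (R := ℤ) k) (D f) *
        (PowerSeries.coeff (R := ℤ) (2*m - k)) (D g)) ?_]
    · apply Finset.sum_congr rfl
      intro i hi
      rw [Finset.mem_range] at hi
      show _ = (PowerSeries.coeff (R := ℤ) (2*i)) (D f) * (PowerSeries.coeff (R := ℤ) (2*m-2*i)) (D g)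
      rw [coeff_D_even, show 2*m - 2*i = 2*(m-i) by omega, coeff_D_even]
    · intro k
      show (PowerSeries.coeff (R := ℤ) (2*k+1)) (D f) * _ = 0
      rw [coeff_D_odd]
      ring
  · subst hm
    rw [coeff_D_odd]
    symm
    apply Finset.sum_eq_zero
    intro k hk
    rw [Finset.mem_range] at hk
    show (PowerSeries.coeff (R := ℤ) k) (D f) * (PowerSeries.coeff (R := ℤ) (2*m+1-k)) (D g) = 0
    rcases Nat.even_or_odd k with ⟨i, hi⟩ | ⟨i, hi⟩
    · rw [show 2*m+1-k = 2*(m-i)+1 by omega, coeff_D_odd]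
      ring
    · rw [show k = 2*i+1 by omega, coeff_D_odd]
      ring

lemma D_one : D 1 = 1 := by
  apply PowerSeries.ext
  intro n
  simp only [D, PowerSeries.coeff_mk, PowerSeries.coeff_one]
  split_ifs <;> simp_all <;> omega

lemma D_add (f g : ℤ⟦X⟧) : D (f + g) = D f + D g := by
  apply PowerSeries.ext
  intro n
  simp only [D, PowerSeries.coeff_mk, map_add]
  split_ifs <;> simp

/-- the doubling ring hom -/
noncomputable def Dh : ℤ⟦X⟧ →+* ℤ⟦X⟧ where
  toFun := D
  map_one' := D_one
  map_mul' := D_mul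
  map_zero' := by
    apply PowerSeries.ext; intro n; simp [D]
  map_add' := D_add

lemma Dh_X : Dh XX = XX^2 := by
  apply PowerSeries.ext
  intro n
  simp only [Dh, RingHom.coe_mk, MonoidHom.coe_mk, OneHom.coe_mk, D,
    PowerSeries.coeff_mk, PowerSeries.coeff_X, PowerSeries.coeff_X_pow]
  split_ifs <;> omega

lemma Dh_C (c : ℤ) : Dh (CC c) = CC c := by
  apply PowerSeries.ext
  intro n
  simp only [Dh, RingHom.coe_mk, MonoidHom.coe_mk, OneHom.coe_mk, D,
    PowerSeries.coeff_mk, PowerSeries.coeff_C]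
  split_ifs <;> first | rfl | (exfalso; omega)


lemma Dh_apply (f : ℤ⟦X⟧) : Dh f = D f := rfl



lemma neg_one_pow_sub {j n : ℕ} (h : j ≤ n) : ((-1:ℤ))^(n-j) = (-1)^n * (-1)^j := by
  have : n + j = (n - j) + 2*j := by omega
  have h2 : ((-1:ℤ))^(n+j) = (-1)^(n-j) := by
    rw [this, pow_add, pow_mul]; simp
  rw [← h2, pow_add]

/-- step L1 -/
lemma L1 (a j : ℕ) :
    PowerSeries.mk (fun k => ((a+k).choose k : ℤ) * (k.choose j : ℤ))
      = CC (((a+j).choose j : ℤ)) *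
        (XX^j * PowerSeries.mk (fun m => ((a+j+m).choose m : ℤ))) := by
  apply PowerSeries.ext
  intro k
  rw [PowerSeries.coeff_mk, PowerSeries.coeff_C_mul, PowerSeries.coeff_X_pow_mul']
  split_ifs with hjk
  · rw [PowerSeries.coeff_mk]
    have := trinom a k j hjk
    rw [show a + j + (k - j) = a + k by omega]
    exact_mod_cast congrArg (Nat.cast (R := ℤ)) this
  · have hz : k.choose j = 0 := Nat.choose_eq_zero_of_lt (by omega)
    rw [hz]
    push_cast; ring

/-- step M1: Vandermonde decomposition -/
lemma M1 (a e b : ℕ) :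
    PowerSeries.mk (fun k => ((a+k).choose k : ℤ) * ((e+k).choose b : ℤ))
      = ∑ j ∈ range (b+1), CC ((e.choose (b-j) : ℤ)) *
          PowerSeries.mk (fun k => ((a+k).choose k : ℤ) * (k.choose j : ℤ)) := by
  apply PowerSeries.ext
  intro k
  rw [map_sum]
  simp only [PowerSeries.coeff_C_mul, PowerSeries.coeff_mk]
  have hvn : (e+k).choose b = ∑ j ∈ range (b+1), e.choose (b-j) * k.choose j := by
    have h0 := Nat.add_choose_eq e k b
    rw [Finset.Nat.sum_antidiagonal_eq_sum_range_succ_mk] at h0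
    have h1 := (Finset.sum_range_reflect (fun i => e.choose (b-i) * k.choose i) (b+1)).symm
    rw [h0, h1]
    apply Finset.sum_congr rfl
    intro i hi
    rw [Finset.mem_range] at hi
    show e.choose (i, b - i).1 * k.choose (i, b - i).2 = e.choose (b - (b + 1 - 1 - i)) * k.choose (b + 1 - 1 - i)
    rw [show b + 1 - 1 - i = b - i by omega, show b - (b - i) = i by omega]
  have hv : ((e+k).choose b : ℤ) = ∑ j ∈ range (b+1), (e.choose (b-j) : ℤ) * (k.choose j : ℤ) := by
    push_cast [hvn]
    rfl
  rw [hv, Finset.mul_sum]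
  apply Finset.sum_congr rfl
  intro j _
  ring

/-- step M2 -/
lemma M2 (a e b : ℕ) :
    ((1:ℤ⟦X⟧) - XX)^(a+b+1) *
        PowerSeries.mk (fun k => ((a+k).choose k : ℤ) * ((e+k).choose b : ℤ))
      = ∑ j ∈ range (b+1), CC ((e.choose (b-j) * (a+j).choose j : ℤ)) *
          (XX^j * (1-XX)^(b-j)) := by
  rw [M1, Finset.mul_sum]
  apply Finset.sum_congr rfl
  intro j hj
  rw [Finset.mem_range] at hj
  rw [L1 a j]
  have hsplit : ((1:ℤ⟦X⟧) - XX)^(a+b+1) = (1-XX)^(b-j) * (1-XX)^(a+j+1) := by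
    rw [← pow_add]; congr 1; omega
  have key := inv_one_sub (a+j)
  calc ((1:ℤ⟦X⟧) - XX)^(a+b+1) *
        (CC ((e.choose (b-j):ℤ)) * (CC (((a+j).choose j : ℤ)) *
          (XX^j * PowerSeries.mk (fun m => ((a+j+m).choose m : ℤ)))))
      = (CC ((e.choose (b-j):ℤ)) * CC (((a+j).choose j : ℤ)) * (XX^j * (1-XX)^(b-j))) *
          ((1-XX)^(a+j+1) * PowerSeries.mk (fun m => ((a+j+m).choose m : ℤ))) := by
        rw [hsplit]; ring
    _ = CC ((e.choose (b-j) * (a+j).choose j : ℤ)) * (XX^j * (1-XX)^(b-j)) := by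
        rw [key, mul_one, map_mul]

/-- coefficient of one term -/
lemma coeff_term (c : ℤ) (j m n : ℕ) :
    (PowerSeries.coeff (R := ℤ) n) (CC c * (XX^j * (1-XX)^m))
      = if j ≤ n then c * ((-1)^(n-j) * ((m.choose (n-j)):ℤ)) else 0 := by
  rw [PowerSeries.coeff_C_mul, PowerSeries.coeff_X_pow_mul']
  split_ifs with h
  · rw [coeff_one_sub_pow]
  · exact mul_zero c

/-- closed form 1 -/
lemma CF1 (a b : ℕ) :
    ∑ j ∈ range (b+1), CC ((b.choose (b-j) * (a+j).choose j : ℤ)) * (XX^j * (1-XX)^(b-j))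
      = ∑ n ∈ range (b+1), CC (((a.choose n : ℤ) * (b.choose n : ℤ))) * XX^n := by
  apply PowerSeries.ext
  intro n
  rw [coeff_sum_CX, map_sum]
  simp only [coeff_term]
  rcases Nat.lt_or_ge n (b+1) with hn | hn
  · rw [if_pos hn]
    have hnb : n ≤ b := by omega
    rw [← Finset.sum_subset (Finset.range_subset_range.mpr (show n+1 ≤ b+1 by omega))
      (fun j hj hj' => by
        rw [Finset.mem_range] at hj hj'
        rw [if_neg (by omega)])]
    have hterm : ∀ j ∈ range (n+1),
        (if j ≤ n then (b.choose (b-j) : ℤ) * ((a+j).choose j : ℤ) *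
            ((-1)^(n-j) * (((b-j).choose (n-j)):ℤ)) else 0)
          = (b.choose n : ℤ) * ((-1)^n * ((-1)^j * (n.choose j : ℤ) * (((a+j).choose a) : ℤ))) := by
      intro j hj
      rw [Finset.mem_range] at hj
      have hjn : j ≤ n := by omega
      rw [if_pos hjn]
      have h1 : b.choose (b-j) = b.choose j := Nat.choose_symm (by omega)
      have h2 : (b.choose j) * ((b-j).choose (n-j)) = b.choose n * n.choose j :=
        (Nat.choose_mul (n := b) hjn).symm
      have h3 : (a+j).choose j = (a+j).choose a := by
        rw [show a + j = j + a from Nat.add_comm a j]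
        exact Nat.choose_symm_add
      rw [neg_one_pow_sub hjn, h1, h3]
      have h2' : ((b.choose j : ℤ)) * (((b-j).choose (n-j) : ℤ))
          = (b.choose n : ℤ) * (n.choose j : ℤ) := by exact_mod_cast h2
      linear_combination ((-1:ℤ)^n * (-1)^j * (((a+j).choose a : ℕ) : ℤ)) * h2' 
    rw [Finset.sum_congr rfl hterm, ← Finset.mul_sum, ← Finset.mul_sum]
    have hS : ∑ j ∈ range (n+1), (-1:ℤ)^j * (n.choose j : ℤ) * (((a+j).choose a) : ℤ) = S a a n :=
      rfl
    rw [hS]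
    rcases le_or_gt n a with hna | hna
    · rw [S_eq_of_le hna a, Nat.choose_symm hna]
      have hsq : ((-1:ℤ))^n * (-1)^n = 1 := by
        rw [← pow_add, show n + n = 2*n by ring, pow_mul]; norm_num
      linear_combination ((b.choose n : ℤ) * (a.choose n : ℤ)) * hsq
    · rw [S_eq_zero hna a, Nat.choose_eq_zero_of_lt hna]
      push_cast; ring
  · rw [if_neg (by omega)]
    apply Finset.sum_eq_zero
    intro j hj
    rw [Finset.mem_range] at hj
    rw [if_pos (by omega), Nat.choose_eq_zero_of_lt (show b - j < n - j by omega)]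
    push_cast; ring

/-- closed form 2 -/
lemma CF2 (A : ℕ) :
    ∑ j ∈ range (A+1), CC (((A+1).choose (A-j) * (A+1+j).choose j : ℤ)) * (XX^j * (1-XX)^(A-j))
      = ∑ n ∈ range (A+1), CC ((((A+1).choose (n+1) : ℤ) * (A.choose n : ℤ))) * XX^n := by
  apply PowerSeries.ext
  intro n
  rw [coeff_sum_CX, map_sum]
  simp only [coeff_term]
  rcases Nat.lt_or_ge n (A+1) with hn | hn
  · rw [if_pos hn]
    have hnA : n ≤ A := by omega
    rw [← Finset.sum_subset (Finset.range_subset_range.mpr (show n+1 ≤ A+1 by omega))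
      (fun j hj hj' => by
        rw [Finset.mem_range] at hj hj'
        rw [if_neg (by omega)])]
    have hterm : ∀ j ∈ range (n+1),
        (if j ≤ n then ((A+1).choose (A-j) : ℤ) * ((A+1+j).choose j : ℤ) *
            ((-1)^(n-j) * (((A-j).choose (n-j)):ℤ)) else 0)
          = ((A+1).choose (n+1) : ℤ) *
              (-(-1)^n * ((-1)^(j+1) * ((n+1).choose (j+1) : ℤ) * (((A+(j+1)).choose (A+1)) : ℤ))) := by
      intro j hj
      rw [Finset.mem_range] at hj
      have hjn : j ≤ n := by omega
      rw [if_pos hjn]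
      have h1 : (A+1).choose (A-j) = (A+1).choose (j+1) := by
        rw [← Nat.choose_symm (show A - j ≤ A+1 by omega), show A + 1 - (A-j) = j+1 by omega]
      have h2 : ((A+1).choose (n+1)) * ((n+1).choose (j+1)) = ((A+1).choose (j+1)) * ((A-j).choose (n-j)) := by
        have := Nat.choose_mul (n := A+1) (show j+1 ≤ n+1 by omega)
        rw [show A + 1 - (j+1) = A - j by omega, show n + 1 - (j+1) = n - j by omega] at this
        exact this
      have h3 : (A+1+j).choose j = (A+(j+1)).choose (A+1) := by
        rw [show A+(j+1) = j+(A+1) by omega, show A+1+j = j+(A+1) by omega]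
        exact Nat.choose_symm_add
      rw [neg_one_pow_sub hjn, h1, h3]
      have h2' : (((A+1).choose (n+1) : ℤ)) * (((n+1).choose (j+1) : ℤ))
          = ((A+1).choose (j+1) : ℤ) * ((A-j).choose (n-j) : ℤ) := by exact_mod_cast h2
      linear_combination (-((-1:ℤ)^n) * (-1)^j * (((A+(j+1)).choose (A+1) : ℕ) : ℤ)) * h2' 
    rw [Finset.sum_congr rfl hterm, ← Finset.mul_sum, ← Finset.mul_sum]
    have hS : ∑ j ∈ range (n+1), (-1:ℤ)^(j+1) * ((n+1).choose (j+1) : ℤ) * (((A+(j+1)).choose (A+1)) : ℤ)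
        = S A (A+1) (n+1) := by
      rw [S]
      rw [Finset.sum_range_succ'
        (fun i => (-1:ℤ)^i * ((n+1).choose i : ℤ) * (((A+i).choose (A+1)) : ℤ)) (n+1)]
      have hz : (A+0).choose (A+1) = 0 := by
        rw [Nat.add_zero]; exact Nat.choose_succ_self A
      rw [hz]
      push_cast
      ring
    rw [hS, S_eq_of_le (show n+1 ≤ A+1 by omega) A, show A + 1 - (n+1) = A - n by omega,
      Nat.choose_symm hnA]
    have hsq : ((-1:ℤ))^n * (-1)^n = 1 := by
      rw [← pow_add, show n + n = 2*n by ring, pow_mul]; norm_num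
    linear_combination (((A+1).choose (n+1) : ℤ) * (A.choose n : ℤ)) * hsq
  · rw [if_neg (by omega)]
    apply Finset.sum_eq_zero
    intro j hj
    rw [Finset.mem_range] at hj
    rw [if_pos (by omega), Nat.choose_eq_zero_of_lt (show A - j < n - j by omega)]
    push_cast; ring




lemma coeff_X_mul (f : ℤ⟦X⟧) (m : ℕ) :
    (PowerSeries.coeff (R := ℤ) m) (XX * f) = if 1 ≤ m then (PowerSeries.coeff (R := ℤ) (m-1)) f else 0 := by
  rw [show XX * f = XX^1 * f by ring, PowerSeries.coeff_X_pow_mul']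

lemma neg_one_pow_even (k : ℕ) : ((-1:ℤ))^(2*k) = 1 := by
  rw [pow_mul]; norm_num
lemma neg_one_pow_odd (k : ℕ) : ((-1:ℤ))^(2*k+1) = -1 := by
  rw [pow_succ, neg_one_pow_even]; norm_num

lemma pascalZ (n k : ℕ) : ((n+1).choose (k+1) : ℤ) = (n.choose k : ℤ) + (n.choose (k+1) : ℤ) := by
  exact_mod_cast congrArg (Nat.cast (R := ℤ)) (Nat.choose_succ_succ' n k)

/-- the big final coefficient identity -/
lemma key (r : ℕ) (a : ℕ → ℤ)
    (hbe : ∀ k, a (2 * k) = (r.choose k : ℤ) ^ 2)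
    (hbo : ∀ k, a (2 * k + 1) = (r.choose k : ℤ) * (r.choose (k + 1) : ℤ)) :
    (∑ n ∈ range (r+2), CC (((r+1).choose n : ℤ) * ((r+1).choose n : ℤ)) * XX^(2*n))
      - XX * (∑ n ∈ range (r+1), CC ((r.choose n : ℤ) * ((r+2).choose (n+1) : ℤ)) * XX^(2*n))
    = (1 - XX)^2 * (∑ k ∈ range (2*r+1), CC ((-1)^k * a k) * XX^k) := by
  set P := ∑ k ∈ range (2*r+1), CC ((-1)^k * a k) * XX^k with hPdef
  have hP : ∀ i, (PowerSeries.coeff (R := ℤ) i) P = if i < 2*r+1 then (-1)^i * a i else 0 := by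
    intro i; rw [hPdef]; exact coeff_sum_CX _ _ i
  have hexp : ((1:ℤ⟦X⟧) - XX)^2 * P = P - XX*P - XX*P + XX*(XX*P) := by ring
  apply PowerSeries.ext
  intro m
  rw [hexp]
  simp only [map_sub, map_add, coeff_X_mul, coeff_sum_CX2, hP]
  rcases Nat.even_or_odd m with ⟨u, hu⟩ | ⟨u, hu⟩
  · -- even: m = 2u
    rw [show m = 2*u from by omega]
    rcases Nat.eq_zero_or_pos u with rfl | hu1
    · norm_num
      have h0 := hbe 0
      norm_num at h0
      rw [h0]
    · obtain ⟨v, rfl⟩ : ∃ v, u = v + 1 := ⟨u - 1, by omega⟩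
      simp only [if_pos (show (1:ℕ) ≤ 2*(v+1) from by omega),
        if_pos (show (1:ℕ) ≤ 2*(v+1)-1 from by omega),
        if_neg (show ¬((2*(v+1)-1) % 2 = 0 ∧ (2*(v+1)-1)/2 < r+1) from by omega)]
      rcases le_or_gt (v+1) r with hvr | hvr
      · -- u ≤ r : main Pascal-squared identity
        simp only [if_pos (show (2*(v+1)) % 2 = 0 ∧ (2*(v+1))/2 < r+2 from by omega),
          if_pos (show 2*(v+1) < 2*r+1 from by omega),
          if_pos (show 2*(v+1)-1 < 2*r+1 from by omega),
          if_pos (show 2*(v+1)-1-1 < 2*r+1 from by omega)]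
        rw [show 2*(v+1)-1-1 = 2*v from by omega, show 2*(v+1)-1 = 2*v+1 from by omega,
          show (2*(v+1))/2 = v+1 from by omega]
        rw [hbe (v+1), hbo v, hbe v, neg_one_pow_even, neg_one_pow_odd, neg_one_pow_even]
        have p := pascalZ r v
        linear_combination (((r+1).choose (v+1) : ℤ) + (r.choose v : ℤ) + (r.choose (v+1) : ℤ)) * p
      · rcases le_or_gt (v+1) (r+1) with hvr2 | hvr2
        · -- u = r+1
          have hvr3 : v = r := by omega
          subst hvr3
          simp only [if_pos (show (2*(v+1)) % 2 = 0 ∧ (2*(v+1))/2 < v+2 from by omega),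
            if_neg (show ¬(2*(v+1) < 2*v+1) from by omega),
            if_neg (show ¬(2*(v+1)-1 < 2*v+1) from by omega),
            if_pos (show 2*(v+1)-1-1 < 2*v+1 from by omega)]
          rw [show 2*(v+1)-1-1 = 2*v from by omega, show (2*(v+1))/2 = v+1 from by omega]
          rw [hbe v, neg_one_pow_even, Nat.choose_self, Nat.choose_self]
          norm_num
        · -- u ≥ r+2
          simp only [if_neg (show ¬((2*(v+1)) % 2 = 0 ∧ (2*(v+1))/2 < r+2) from by omega),
            if_neg (show ¬(2*(v+1) < 2*r+1) from by omega),
            if_neg (show ¬(2*(v+1)-1 < 2*r+1) from by omega),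
            if_neg (show ¬(2*(v+1)-1-1 < 2*r+1) from by omega)]
          norm_num
  · -- odd: m = 2u+1
    rw [hu]
    simp only [if_neg (show ¬((2*u+1) % 2 = 0 ∧ (2*u+1)/2 < r+2) from by omega),
      if_pos (show 1 ≤ 2*u+1 from by omega)]
    rcases Nat.eq_zero_or_pos u with rfl | hu1
    · -- u = 0
      simp only [if_neg (show ¬((1:ℕ) ≤ 2*0+1-1) from by omega),
        if_pos (show (2*0+1-1) % 2 = 0 ∧ (2*0+1-1)/2 < r+1 from by omega),
        if_pos (show 2*0+1-1 < 2*r+1 from by omega)]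
      rw [show 2*0+1-1 = 2*0 from by omega, show (2*0)/2 = 0 from by omega]
      rcases Nat.eq_zero_or_pos r with rfl | hr1
      · simp only [if_neg (show ¬(2*0+1 < 2*0+1) from by omega)]
        rw [hbe 0, neg_one_pow_even 0]
        norm_num
      · simp only [if_pos (show 2*0+1 < 2*r+1 from by omega)]
        rw [hbo 0, hbe 0, neg_one_pow_odd 0, neg_one_pow_even 0]
        norm_num [Nat.choose_one_right]
        push_cast
        ring
    · -- u ≥ 1
      obtain ⟨w, rfl⟩ : ∃ w, u = w + 1 := ⟨u - 1, by omega⟩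
      simp only [if_pos (show (1:ℕ) ≤ 2*(w+1)+1-1 from by omega)]
      rcases le_or_gt (w+2) r with hwr | hwr
      · -- u < r
        simp only [if_pos (show (2*(w+1)+1-1)%2 = 0 ∧ (2*(w+1)+1-1)/2 < r+1 from by omega),
          if_pos (show 2*(w+1)+1 < 2*r+1 from by omega),
          if_pos (show 2*(w+1)+1-1 < 2*r+1 from by omega),
          if_pos (show 2*(w+1)+1-1-1 < 2*r+1 from by omega)]
        rw [show 2*(w+1)+1-1-1 = 2*w+1 from by omega, show 2*(w+1)+1-1 = 2*(w+1) from by omega,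
          show (2*(w+1))/2 = w+1 from by omega]
        rw [hbo (w+1), hbe (w+1), hbo w,
          neg_one_pow_odd (w+1), neg_one_pow_even (w+1), neg_one_pow_odd w]
        have p1 := pascalZ r (w+1)
        have p2 := pascalZ r w
        have p3 := pascalZ (r+1) (w+1)
        linear_combination (-(r.choose (w+1) : ℤ)) * (p1 + p2 + p3)
      · rcases le_or_gt (w+1) r with hwr2 | hwr2
        · -- u = r
          have hw : r = w+1 := by omega
          subst hw
          simp only [if_pos (show (2*(w+1)+1-1)%2 = 0 ∧ (2*(w+1)+1-1)/2 < (w+1)+1 from by omega),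
            if_neg (show ¬(2*(w+1)+1 < 2*(w+1)+1) from by omega),
            if_pos (show 2*(w+1)+1-1 < 2*(w+1)+1 from by omega),
            if_pos (show 2*(w+1)+1-1-1 < 2*(w+1)+1 from by omega)]
          rw [show 2*(w+1)+1-1-1 = 2*w+1 from by omega, show 2*(w+1)+1-1 = 2*(w+1) from by omega,
            show (2*(w+1))/2 = w+1 from by omega]
          rw [hbe (w+1), hbo w, neg_one_pow_even (w+1), neg_one_pow_odd w]
          rw [Nat.choose_self, show w+1+2 = (w+1+1)+1 from by omega,
            Nat.choose_succ_self_right (w+1+1), Nat.choose_succ_self_right w]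
          push_cast
          ring
        · -- u > r
          simp only [if_neg (show ¬((2*(w+1)+1-1)%2 = 0 ∧ (2*(w+1)+1-1)/2 < r+1) from by omega),
            if_neg (show ¬(2*(w+1)+1 < 2*r+1) from by omega),
            if_neg (show ¬(2*(w+1)+1-1 < 2*r+1) from by omega),
            if_neg (show ¬(2*(w+1)+1-1-1 < 2*r+1) from by omega)]
          norm_num




section Spec
variable (r : ℕ)

noncomputable def Fs : ℤ⟦X⟧ :=
  PowerSeries.mk (fun k => (((r+1)+k).choose k : ℤ) * (((r+1)+k).choose (r+1) : ℤ))
noncomputable def Hs : ℤ⟦X⟧ :=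
  PowerSeries.mk (fun k => (((r+1)+k).choose k : ℤ) * (((r+1)+k).choose r : ℤ))
noncomputable def Gs : ℤ⟦X⟧ :=
  PowerSeries.mk (fun k => ((r+1+k).choose k : ℤ) * ((r+2+k).choose (k+1) : ℤ))

lemma R1 : (1-XX)^((r+1)+(r+1)+1) * Fs r
    = ∑ n ∈ range ((r+1)+1), CC ((((r+1).choose n : ℤ) * ((r+1).choose n : ℤ))) * XX^n :=
  (M2 (r+1) (r+1) (r+1)).trans (CF1 (r+1) (r+1))

lemma RH : (1-XX)^((r+1)+r+1) * Hs r
    = ∑ n ∈ range (r+1), CC ((((r+1).choose (n+1) : ℤ) * (r.choose n : ℤ))) * XX^n :=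
  (M2 (r+1) (r+1) r).trans (CF2 r)

lemma hG : Gs r = Fs r + Hs r := by
  apply PowerSeries.ext
  intro k
  simp only [Fs, Hs, Gs, map_add, PowerSeries.coeff_mk]
  have h2 := Nat.choose_succ_succ' (r+1+k) k
  have h3 : (r+1+k).choose k = (r+1+k).choose (r+1) := by
    rw [← Nat.choose_symm (show k ≤ r+1+k by omega)]
    congr 1
    omega
  have h4 : (r+1+k).choose (k+1) = (r+1+k).choose r := by
    rw [← Nat.choose_symm (show k+1 ≤ r+1+k by omega)]
    congr 1
    omega
  have h1 : (r+2+k).choose (k+1) = (r+1+k).choose (r+1) + (r+1+k).choose r := by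
    rw [show r+2+k = r+1+k+1 by omega]
    omega
  rw [h1]
  push_cast
  ring

lemma poly_id :
    (∑ n ∈ range (r+2), CC ((((r+1).choose n : ℤ) * ((r+1).choose n : ℤ))) * XX^n)
      + (1-XX) * (∑ n ∈ range (r+1), CC ((((r+1).choose (n+1) : ℤ) * (r.choose n : ℤ))) * XX^n)
    = ∑ n ∈ range (r+1), CC (((r.choose n : ℤ) * ((r+2).choose (n+1) : ℤ))) * XX^n := by
  have e : ∀ f : ℤ⟦X⟧, (1-XX) * f = f - XX*f := by intro f; ring
  rw [e]
  apply PowerSeries.ext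
  intro m
  simp only [map_add, map_sub, coeff_X_mul, coeff_sum_CX]
  rcases Nat.eq_zero_or_pos m with rfl | hm
  · simp only [if_pos (show (0:ℕ) < r+2 from by omega), if_pos (show (0:ℕ) < r+1 from by omega),
      if_neg (show ¬((1:ℕ) ≤ 0) from by omega)]
    norm_num [Nat.choose_one_right]
    push_cast
    ring
  · obtain ⟨v, rfl⟩ : ∃ v, m = v + 1 := ⟨m - 1, by omega⟩
    simp only [if_pos (show (1:ℕ) ≤ v+1 from by omega)]
    rw [show v+1-1 = v from by omega]
    rcases le_or_gt (v+1) r with hvr | hvr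
    · simp only [if_pos (show v+1 < r+2 from by omega), if_pos (show v+1 < r+1 from by omega),
        if_pos (show v < r+1 from by omega)]
      have p1 := pascalZ r v
      have p2 := pascalZ (r+1) (v+1)
      linear_combination (((r+1).choose (v+1) : ℤ)) * p1 - ((r.choose (v+1) : ℤ)) * p2
    · rcases le_or_gt (v+1) (r+1) with hvr2 | hvr2
      · have hv : v = r := by omega
        subst hv
        simp only [if_pos (show v+1 < v+2 from by omega), if_neg (show ¬(v+1 < v+1) from by omega),
          if_pos (show v < v+1 from by omega)]
        rw [Nat.choose_self, Nat.choose_self]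
        norm_num
      · simp only [if_neg (show ¬(v+1 < r+2) from by omega),
          if_neg (show ¬(v+1 < r+1) from by omega),
          if_neg (show ¬(v < r+1) from by omega)]
        norm_num

lemma R2 : (1-XX)^(2*r+3) * Gs r
    = ∑ n ∈ range (r+1), CC (((r.choose n : ℤ) * ((r+2).choose (n+1) : ℤ))) * XX^n := by
  rw [hG, mul_add]
  have e1 : ((1:ℤ⟦X⟧)-XX)^(2*r+3) * Fs r = (1-XX)^((r+1)+(r+1)+1) * Fs r := by
    rw [show 2*r+3 = (r+1)+(r+1)+1 from by ring]
  have e2 : ((1:ℤ⟦X⟧)-XX)^(2*r+3) * Hs r = (1-XX) * ((1-XX)^((r+1)+r+1) * Hs r) := by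
    rw [show 2*r+3 = ((r+1)+r+1)+1 from by ring, pow_succ]
    ring
  rw [e1, e2, R1, RH]
  exact poly_id r

lemma Dh_sum (c : ℕ → ℤ) (N : ℕ) :
    Dh (∑ n ∈ range N, CC (c n) * XX^n) = ∑ n ∈ range N, CC (c n) * XX^(2*n) := by
  rw [map_sum]
  apply Finset.sum_congr rfl
  intro n _
  rw [map_mul, Dh_C, map_pow, Dh_X, ← pow_mul]

lemma Dh_one_sub_pow (N : ℕ) : Dh ((1-XX)^N) = (1 - XX^2)^N := by
  rw [map_pow, map_sub, map_one, Dh_X]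

end Spec

theorem hilbert_series_identity_aux (r : ℕ)
    (aTil : ℕ → ℤ)
    (hae : ∀ k, aTil (2 * k) = ((r + k + 1).choose k : ℤ) ^ 2)
    (hao : ∀ k, aTil (2 * k + 1) = ((r + k + 1).choose k : ℤ) * ((r + k + 2).choose (k + 1) : ℤ))
    (a : ℕ → ℤ)
    (hbe : ∀ k, a (2 * k) = (r.choose k : ℤ) ^ 2)
    (hbo : ∀ k, a (2 * k + 1) = (r.choose k : ℤ) * (r.choose (k + 1) : ℤ)) :
    (1 - PowerSeries.X ^ 2) ^ (3 * (r + 1)) *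
        PowerSeries.mk (fun k => (-1) ^ k * aTil k)
      = (1 - PowerSeries.X) ^ (r + 2) * (1 + PowerSeries.X) ^ r *
          ∑ k ∈ Finset.range (2 * r + 1),
            PowerSeries.C (R := ℤ) ((-1) ^ k * a k) * PowerSeries.X ^ k := by
  have hstep : PowerSeries.mk (fun k => (-1) ^ k * aTil k) = Dh (Fs r) - XX * Dh (Gs r) := by
    apply PowerSeries.ext
    intro n
    rw [map_sub, PowerSeries.coeff_mk, Dh_apply, Dh_apply, coeff_X_mul]
    rcases Nat.even_or_odd n with ⟨u, hu⟩ | ⟨u, hu⟩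
    · rw [show n = 2*u from by omega, coeff_D_even]
      have hF : (PowerSeries.coeff (R := ℤ) u) (Fs r) = (((r+1)+u).choose u : ℤ) * (((r+1)+u).choose (r+1) : ℤ) := by
        simp [Fs, PowerSeries.coeff_mk]
      rw [hF, hae u, neg_one_pow_even]
      have hsymm : ((r+1)+u).choose (r+1) = ((r+1)+u).choose u := Nat.choose_symm_add
      rw [hsymm, show r+u+1 = (r+1)+u from by omega]
      rcases Nat.eq_zero_or_pos u with rfl | hu1
      · rw [if_neg (show ¬((1:ℕ) ≤ 2*0) from by omega)]
        push_cast
        ring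
      · obtain ⟨v, rfl⟩ : ∃ v, u = v + 1 := ⟨u - 1, by omega⟩
        rw [if_pos (show (1:ℕ) ≤ 2*(v+1) from by omega), show 2*(v+1)-1 = 2*v+1 from by omega,
          coeff_D_odd]
        push_cast
        ring
    · rw [hu, if_pos (show (1:ℕ) ≤ 2*u+1 from by omega), show 2*u+1-1 = 2*u from by omega,
        coeff_D_even]
      have hFodd : (PowerSeries.coeff (R := ℤ) (2*u+1)) (D (Fs r)) = 0 := coeff_D_odd _ u
      rw [hFodd]
      have hGc : (PowerSeries.coeff (R := ℤ) u) (Gs r) = ((r+1+u).choose u : ℤ) * ((r+2+u).choose (u+1) : ℤ) := by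
        simp [Gs, PowerSeries.coeff_mk]
      rw [hGc, hao u, neg_one_pow_odd]
      rw [show r+u+1 = r+1+u from by omega, show r+u+2 = r+2+u from by omega]
      push_cast
      ring
  rw [hstep]
  have h2 : ((1:ℤ⟦X⟧) - XX^2)^(2*r+3) * Dh (Fs r)
      = ∑ n ∈ range (r+2), CC (((r+1).choose n : ℤ) * ((r+1).choose n : ℤ)) * XX^(2*n) := by
    rw [← Dh_one_sub_pow, ← map_mul]
    rw [show ((1:ℤ⟦X⟧)-XX)^(2*r+3) = (1-XX)^((r+1)+(r+1)+1) from by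
      rw [show 2*r+3 = (r+1)+(r+1)+1 from by ring]]
    rw [R1, show (r+1)+1 = r+2 from by ring]
    exact Dh_sum _ _
  have h3 : ((1:ℤ⟦X⟧) - XX^2)^(2*r+3) * Dh (Gs r)
      = ∑ n ∈ range (r+1), CC ((r.choose n : ℤ) * ((r+2).choose (n+1) : ℤ)) * XX^(2*n) := by
    rw [← Dh_one_sub_pow, ← map_mul, R2]
    exact Dh_sum _ _
  have hsplit : ((1:ℤ⟦X⟧) - XX^2)^(3*(r+1)) * (Dh (Fs r) - XX * Dh (Gs r))
      = (1-XX^2)^r * (((1-XX^2)^(2*r+3) * Dh (Fs r)) - XX * ((1-XX^2)^(2*r+3) * Dh (Gs r))) := by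
    rw [show 3*(r+1) = r + (2*r+3) from by ring, pow_add]
    ring
  rw [hsplit, h2, h3, key r a hbe hbo]
  have hfact : ((1:ℤ⟦X⟧)-XX^2)^r = (1-XX)^r * (1+XX)^r := by
    rw [← mul_pow]
    congr 1
    ring
  rw [hfact]
  ring


end HSIproof

/-- For every `r ≥ 0`, in `ℤ⟦t⟧`:
`(1 − t²)^{3(r+1)} · Σ_{k≥0} (−1)^k aTil_k t^k
  = (1 − t)^{r+2} (1 + t)^r · Σ_{k=0}^{2r} (−1)^k a_k t^k`,
where `aTil_{2k} = C(r+k+1,k)²`, `aTil_{2k+1} = C(r+k+1,k)·C(r+k+2,k+1)`,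
`a_{2k} = C(r,k)²`, `a_{2k+1} = C(r,k)·C(r,k+1)`. -/
theorem hilbert_series_identity (r : ℕ)
    (aTil : ℕ → ℤ)
    (hae : ∀ k, aTil (2 * k) = ((r + k + 1).choose k : ℤ) ^ 2)
    (hao : ∀ k, aTil (2 * k + 1) = ((r + k + 1).choose k : ℤ) * ((r + k + 2).choose (k + 1) : ℤ))
    (a : ℕ → ℤ)
    (hbe : ∀ k, a (2 * k) = (r.choose k : ℤ) ^ 2)
    (hbo : ∀ k, a (2 * k + 1) = (r.choose k : ℤ) * (r.choose (k + 1) : ℤ)) :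
    (1 - PowerSeries.X ^ 2) ^ (3 * (r + 1)) *
        PowerSeries.mk (fun k => (-1) ^ k * aTil k)
      = (1 - PowerSeries.X) ^ (r + 2) * (1 + PowerSeries.X) ^ r *
          ∑ k ∈ Finset.range (2 * r + 1),
            PowerSeries.C (R := ℤ) ((-1) ^ k * a k) * PowerSeries.X ^ k :=
  HSIproof.hilbert_series_identity_aux r aTil hae hao a hbe hbo
end

section
/- For every integer r ≥ 0, the following identity of formal power series over ℤ holds: (1 − t²)^{2(r+1)} · Σ_{k ≥ 0} (−1)^k ã'_k t^k = Σ_{k=0}^{2r+1} (−1)^k a'_k t^k, where ã'_{2k} = C(r+k+1, k)·C(r+k, k), ã'_{2k+1} = C(r+k+1, k)·C(r+k+1, k+1), a'_{2k} = C(r, k)·C(r+1, k), and a'_{2k+1} = C(r, k)·C(r+1, k+1). -/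
open Finset Nat PowerSeries

lemma choose_mul' {n k s : ℕ} (hsk : s ≤ k) :
    n.choose k * k.choose s = n.choose s * (n - s).choose (k - s) := by
  rcases le_or_gt k n with h | h
  · exact Nat.choose_mul hsk
  · rw [Nat.choose_eq_zero_of_lt h, zero_mul]
    rcases le_or_gt s n with hs | hs
    · rw [Nat.choose_eq_zero_of_lt (by omega : n - s < k - s), mul_zero]
    · rw [Nat.choose_eq_zero_of_lt hs, zero_mul]

lemma sum_shift {M a : ℕ} (haM : a ≤ M) (h : ℕ → ℕ)
    (h0 : ∀ k < a, h k = 0) :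
    ∑ k ∈ range (M + 1), h k = ∑ k ∈ range (M + 1 - a), h (a + k) := by
  have hsplit : ∑ k ∈ Finset.Ico 0 a, h k + ∑ k ∈ Finset.Ico a (M + 1), h k
      = ∑ k ∈ Finset.Ico 0 (M + 1), h k :=
    Finset.sum_Ico_consecutive _ (Nat.zero_le a) (by omega)
  have h1 : ∑ k ∈ Finset.Ico a (M + 1), h k = ∑ k ∈ range (M + 1 - a), h (a + k) :=
    Finset.sum_Ico_eq_sum_range h a (M+1)
  have h2 : ∑ k ∈ Finset.Ico 0 a, h k = 0 :=
    Finset.sum_eq_zero fun k hk => h0 k (Finset.mem_Ico.mp hk).2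
  rw [range_eq_Ico, ← hsplit, h1, h2, zero_add, range_eq_Ico]

/-- Inner sum, even variant. -/
lemma inner1 {r a : ℕ} (har : a ≤ r) :
    ∑ k ∈ range (r + 1), r.choose k * (r + 1).choose k * k.choose a
      = (r + 1).choose a * (2 * r + 1 - a).choose (r - a) := by
  rw [sum_shift har _ (fun k hk => by
    rw [Nat.choose_eq_zero_of_lt hk, mul_zero])]
  have step : ∀ k, r.choose (a + k) * (r + 1).choose (a + k) * (a + k).choose a
      = (r + 1).choose a * ((r + 1 - a).choose k * r.choose (a + k)) := by
    intro k
    have := choose_mul' (n := r + 1) (k := a + k) (s := a) (Nat.le_add_right a k)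
    rw [Nat.add_sub_cancel_left] at this
    calc r.choose (a + k) * (r + 1).choose (a + k) * (a + k).choose a
        = r.choose (a + k) * ((r + 1).choose (a + k) * (a + k).choose a) := by ring
      _ = r.choose (a + k) * ((r + 1).choose a * (r + 1 - a).choose k) := by rw [this]
      _ = (r + 1).choose a * ((r + 1 - a).choose k * r.choose (a + k)) := by ring
  rw [Finset.sum_congr rfl (fun k _ => step k), ← Finset.mul_sum]
  congr 1
  -- ∑ k ∈ range (r + 1 - a), (r+1-a).choose k * r.choose (a+k) = (2r+1-a).choose (r-a)
  have hra : r + 1 - a = (r - a) + 1 := by omega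
  rw [hra]
  have hstep : ∀ k ∈ range (r - a + 1),
      (r - a + 1).choose k * r.choose (a + k) = (r - a + 1).choose k * r.choose (r - a - k) := by
    intro k hk
    rw [mem_range] at hk
    congr 1
    rw [← Nat.choose_symm (by omega : a + k ≤ r)]
    congr 1
    omega
  rw [Finset.sum_congr rfl hstep]
  have hv := Nat.add_choose_eq (r - a + 1) r (r - a)
  rw [Finset.Nat.sum_antidiagonal_eq_sum_range_succ
    (f := fun i j => (r - a + 1).choose i * r.choose j)] at hv
  rw [← hv]
  congr 1
  omega

/-- Inner sum, odd variant. -/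
lemma inner0 {r a : ℕ} (har : a ≤ r) :
    ∑ k ∈ range (r + 1), r.choose k * (r + 1).choose (k + 1) * k.choose a
      = r.choose a * (2 * r + 1 - a).choose (r - a) := by
  rw [sum_shift har _ (fun k hk => by
    rw [Nat.choose_eq_zero_of_lt hk, mul_zero])]
  have step : ∀ k, r.choose (a + k) * (r + 1).choose (a + k + 1) * (a + k).choose a
      = r.choose a * ((r - a).choose k * (r + 1).choose (a + k + 1)) := by
    intro k
    have := choose_mul' (n := r) (k := a + k) (s := a) (Nat.le_add_right a k)
    rw [Nat.add_sub_cancel_left] at this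
    calc r.choose (a + k) * (r + 1).choose (a + k + 1) * (a + k).choose a
        = (r.choose (a + k) * (a + k).choose a) * (r + 1).choose (a + k + 1) := by ring
      _ = (r.choose a * (r - a).choose k) * (r + 1).choose (a + k + 1) := by rw [this]
      _ = r.choose a * ((r - a).choose k * (r + 1).choose (a + k + 1)) := by ring
  rw [Finset.sum_congr rfl (fun k _ => step k), ← Finset.mul_sum]
  congr 1
  have hra : r + 1 - a = (r - a) + 1 := by omega
  rw [hra]
  have hstep : ∀ k ∈ range (r - a + 1),
      (r - a).choose k * (r + 1).choose (a + k + 1)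
        = (r - a).choose k * (r + 1).choose (r - a - k) := by
    intro k hk
    rw [mem_range] at hk
    congr 1
    rw [← Nat.choose_symm (by omega : a + k + 1 ≤ r + 1)]
    congr 1
    omega
  rw [Finset.sum_congr rfl hstep]
  have hv := Nat.add_choose_eq (r - a) (r + 1) (r - a)
  rw [Finset.Nat.sum_antidiagonal_eq_sum_range_succ
    (f := fun i j => (r - a).choose i * (r + 1).choose j)] at hv
  rw [← hv]
  congr 1
  omega

lemma Aform1 {r q : ℕ} (hq : r ≤ q) :
    ∑ k ∈ range (r + 1), r.choose k * (r + 1).choose k * (q + 1 + k).choose (2 * r + 1)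
      = (q + 1).choose r * (q + 1).choose (r + 1) := by
  have expand : ∀ k ∈ range (r + 1),
      r.choose k * (r + 1).choose k * (q + 1 + k).choose (2 * r + 1)
      = ∑ x ∈ range (2 * r + 1 + 1),
          (q + 1).choose (2 * r + 1 - x) * (r.choose k * (r + 1).choose k * k.choose x) := by
    intro k _
    rw [show q + 1 + k = k + (q + 1) by ring, Nat.add_choose_eq k (q + 1) (2 * r + 1),
        Finset.Nat.sum_antidiagonal_eq_sum_range_succ
          (f := fun i j => k.choose i * (q + 1).choose j),
        Finset.mul_sum]
    exact Finset.sum_congr rfl fun x hx => by ring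
  rw [Finset.sum_congr rfl expand, Finset.sum_comm]
  have hmul : ∀ x ∈ range (2 * r + 1 + 1),
      ∑ k ∈ range (r + 1),
        (q + 1).choose (2 * r + 1 - x) * (r.choose k * (r + 1).choose k * k.choose x)
      = (q + 1).choose (2 * r + 1 - x)
          * ∑ k ∈ range (r + 1), r.choose k * (r + 1).choose k * k.choose x := by
    intro x _
    rw [Finset.mul_sum]
  rw [Finset.sum_congr rfl hmul]
  rw [← Finset.sum_subset (Finset.range_subset_range.mpr (by omega : r + 1 ≤ 2 * r + 1 + 1))
    (by
      intro x _ hx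
      rw [mem_range, not_lt] at hx
      have hz : ∑ k ∈ range (r + 1), r.choose k * (r + 1).choose k * k.choose x = 0 :=
        Finset.sum_eq_zero fun k hk => by
          rw [mem_range] at hk
          rw [Nat.choose_eq_zero_of_lt (by omega : k < x), mul_zero]
      rw [hz, mul_zero])]
  have hterm : ∀ x ∈ range (r + 1),
      (q + 1).choose (2 * r + 1 - x)
          * ∑ k ∈ range (r + 1), r.choose k * (r + 1).choose k * k.choose x
      = (q + 1).choose (r + 1) * ((r + 1).choose x * (q - r).choose (r - x)) := by
    intro x hx
    rw [mem_range] at hx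
    have hxr : x ≤ r := by omega
    rw [inner1 hxr]
    have hsymm : (2 * r + 1 - x).choose (r - x) = (2 * r + 1 - x).choose (r + 1) := by
      rw [← Nat.choose_symm (by omega : r + 1 ≤ 2 * r + 1 - x)]
      congr 1
      omega
    have htri := choose_mul' (n := q + 1) (k := 2 * r + 1 - x) (s := r + 1)
      (by omega : r + 1 ≤ 2 * r + 1 - x)
    have h1 : q + 1 - (r + 1) = q - r := by omega
    have h2 : 2 * r + 1 - x - (r + 1) = r - x := by omega
    rw [h1, h2] at htri
    calc (q + 1).choose (2 * r + 1 - x) * ((r + 1).choose x * (2 * r + 1 - x).choose (r - x))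
        = ((q + 1).choose (2 * r + 1 - x) * (2 * r + 1 - x).choose (r + 1)) * (r + 1).choose x := by
          rw [hsymm]; ring
      _ = ((q + 1).choose (r + 1) * (q - r).choose (r - x)) * (r + 1).choose x := by rw [htri]
      _ = (q + 1).choose (r + 1) * ((r + 1).choose x * (q - r).choose (r - x)) := by ring
  rw [Finset.sum_congr rfl hterm, ← Finset.mul_sum]
  have hv := Nat.add_choose_eq (r + 1) (q - r) r
  rw [Finset.Nat.sum_antidiagonal_eq_sum_range_succ
    (f := fun i j => (r + 1).choose i * (q - r).choose j)] at hv
  rw [← hv, show r + 1 + (q - r) = q + 1 by omega, mul_comm]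

lemma Aform0 {r q : ℕ} (hq : r ≤ q) :
    ∑ k ∈ range (r + 1), r.choose k * (r + 1).choose (k + 1) * (q + 1 + k).choose (2 * r + 1)
      = q.choose r * (q + 1).choose (r + 1) := by
  have expand : ∀ k ∈ range (r + 1),
      r.choose k * (r + 1).choose (k + 1) * (q + 1 + k).choose (2 * r + 1)
      = ∑ x ∈ range (2 * r + 1 + 1),
          (q + 1).choose (2 * r + 1 - x) * (r.choose k * (r + 1).choose (k + 1) * k.choose x) := by
    intro k _
    rw [show q + 1 + k = k + (q + 1) by ring, Nat.add_choose_eq k (q + 1) (2 * r + 1),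
        Finset.Nat.sum_antidiagonal_eq_sum_range_succ
          (f := fun i j => k.choose i * (q + 1).choose j),
        Finset.mul_sum]
    exact Finset.sum_congr rfl fun x hx => by ring
  rw [Finset.sum_congr rfl expand, Finset.sum_comm]
  have hmul : ∀ x ∈ range (2 * r + 1 + 1),
      ∑ k ∈ range (r + 1),
        (q + 1).choose (2 * r + 1 - x) * (r.choose k * (r + 1).choose (k + 1) * k.choose x)
      = (q + 1).choose (2 * r + 1 - x)
          * ∑ k ∈ range (r + 1), r.choose k * (r + 1).choose (k + 1) * k.choose x := by
    intro x _
    rw [Finset.mul_sum]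
  rw [Finset.sum_congr rfl hmul]
  rw [← Finset.sum_subset (Finset.range_subset_range.mpr (by omega : r + 1 ≤ 2 * r + 1 + 1))
    (by
      intro x _ hx
      rw [mem_range, not_lt] at hx
      have hz : ∑ k ∈ range (r + 1), r.choose k * (r + 1).choose (k + 1) * k.choose x = 0 :=
        Finset.sum_eq_zero fun k hk => by
          rw [mem_range] at hk
          rw [Nat.choose_eq_zero_of_lt (by omega : k < x), mul_zero]
      rw [hz, mul_zero])]
  have hterm : ∀ x ∈ range (r + 1),
      (q + 1).choose (2 * r + 1 - x)
          * ∑ k ∈ range (r + 1), r.choose k * (r + 1).choose (k + 1) * k.choose x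
      = (q + 1).choose (r + 1) * (r.choose x * (q - r).choose (r - x)) := by
    intro x hx
    rw [mem_range] at hx
    have hxr : x ≤ r := by omega
    rw [inner0 hxr]
    have hsymm : (2 * r + 1 - x).choose (r - x) = (2 * r + 1 - x).choose (r + 1) := by
      rw [← Nat.choose_symm (by omega : r + 1 ≤ 2 * r + 1 - x)]
      congr 1
      omega
    have htri := choose_mul' (n := q + 1) (k := 2 * r + 1 - x) (s := r + 1)
      (by omega : r + 1 ≤ 2 * r + 1 - x)
    have h1 : q + 1 - (r + 1) = q - r := by omega
    have h2 : 2 * r + 1 - x - (r + 1) = r - x := by omega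
    rw [h1, h2] at htri
    calc (q + 1).choose (2 * r + 1 - x) * (r.choose x * (2 * r + 1 - x).choose (r - x))
        = ((q + 1).choose (2 * r + 1 - x) * (2 * r + 1 - x).choose (r + 1)) * r.choose x := by
          rw [hsymm]; ring
      _ = ((q + 1).choose (r + 1) * (q - r).choose (r - x)) * r.choose x := by rw [htri]
      _ = (q + 1).choose (r + 1) * (r.choose x * (q - r).choose (r - x)) := by ring
  rw [Finset.sum_congr rfl hterm, ← Finset.mul_sum]
  have hv := Nat.add_choose_eq r (q - r) r
  rw [Finset.Nat.sum_antidiagonal_eq_sum_range_succ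
    (f := fun i j => r.choose i * (q - r).choose j)] at hv
  rw [← hv, show r + (q - r) = q by omega, mul_comm]

/-- reflection: generic transfer between the `G` and `A` orientations -/
lemma reflect_sum (r s : ℕ) (f g : ℕ → ℕ)
    (hf0 : ∀ j, r < j → f j = 0) (hg0 : ∀ k, r + s + 1 + k < 2 * r + 1 → g k = 0)
    (hfg : ∀ j, j ≤ r → j ≤ s → f j = g (r - j)) :
    ∑ j ∈ range (s + 1), f j = ∑ k ∈ range (r + 1), g k := by
  have e1 : ∑ j ∈ (range (s + 1)).filter (fun j => j ≤ r), f j = ∑ j ∈ range (s + 1), f j :=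
    Finset.sum_filter_of_ne (by intro j _ hj; by_contra h; exact hj (hf0 j (by omega)))
  have e2 : ∑ k ∈ (range (r + 1)).filter (fun k => r ≤ s + k), g k = ∑ k ∈ range (r + 1), g k :=
    Finset.sum_filter_of_ne (by intro k _ hk; by_contra h; exact hk (hg0 k (by omega)))
  rw [← e1, ← e2]
  refine Finset.sum_nbij' (fun j => r - j) (fun k => r - k) ?_ ?_ ?_ ?_ ?_
  · intro j hj
    simp only [Finset.mem_filter, Finset.mem_range] at *
    omega
  · intro k hk
    simp only [Finset.mem_filter, Finset.mem_range] at *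
    omega
  · intro j hj
    simp only [Finset.mem_filter, Finset.mem_range] at hj
    show r - (r - j) = j
    omega
  · intro k hk
    simp only [Finset.mem_filter, Finset.mem_range] at hk
    show r - (r - k) = k
    omega
  · intro j hj
    simp only [Finset.mem_filter, Finset.mem_range] at hj
    exact hfg j hj.2 (by omega)

lemma Gform0 (r s : ℕ) :
    ∑ j ∈ range (s + 1), r.choose j * (r + 1).choose j * (2 * r + 1 + (s - j)).choose (s - j)
      = (r + s + 1).choose s * (r + s).choose s := by
  refine (reflect_sum r s _
      (fun k => r.choose k * (r + 1).choose (k + 1) * (r + s + 1 + k).choose (2 * r + 1))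
      ?_ ?_ ?_).trans ((Aform0 (show r ≤ r + s by omega)).trans ?_)
  · intro j hj
    rw [Nat.choose_eq_zero_of_lt hj, zero_mul, zero_mul]
  · intro k hk
    rw [Nat.choose_eq_zero_of_lt hk, mul_zero]
  · intro j hjr hjs
    have h1 : r.choose j = r.choose (r - j) := (Nat.choose_symm hjr).symm
    have h2 : (r + 1).choose j = (r + 1).choose (r - j + 1) := by
      rw [← Nat.choose_symm (by omega : j ≤ r + 1)]
      congr 1
      omega
    have h3 : (2 * r + 1 + (s - j)).choose (s - j)
        = (r + s + 1 + (r - j)).choose (2 * r + 1) := by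
      have hs := Nat.choose_symm (by omega : 2 * r + 1 ≤ 2 * r + 1 + (s - j))
      rw [show 2 * r + 1 + (s - j) - (2 * r + 1) = s - j by omega] at hs
      rw [hs]
      congr 1
      omega
    rw [h1, h2, h3]
  · have c1 : (r + s).choose r = (r + s).choose s := by
      rw [← Nat.choose_symm (by omega : r ≤ r + s)]
      congr 1
      omega
    have c2 : (r + s + 1).choose (r + 1) = (r + s + 1).choose s := by
      rw [← Nat.choose_symm (by omega : r + 1 ≤ r + s + 1)]
      congr 1
      omega
    rw [c1, c2, mul_comm]

lemma Gform1 (r s : ℕ) :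
    ∑ j ∈ range (s + 1), r.choose j * (r + 1).choose (j + 1) * (2 * r + 1 + (s - j)).choose (s - j)
      = (r + s + 1).choose s * (r + s + 1).choose (s + 1) := by
  refine (reflect_sum r s _
      (fun k => r.choose k * (r + 1).choose k * (r + s + 1 + k).choose (2 * r + 1))
      ?_ ?_ ?_).trans ((Aform1 (show r ≤ r + s by omega)).trans ?_)
  · intro j hj
    rw [Nat.choose_eq_zero_of_lt hj, zero_mul, zero_mul]
  · intro k hk
    rw [Nat.choose_eq_zero_of_lt hk, mul_zero]
  · intro j hjr hjs
    have h1 : r.choose j = r.choose (r - j) := (Nat.choose_symm hjr).symm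
    have h2 : (r + 1).choose (j + 1) = (r + 1).choose (r - j) := by
      rw [← Nat.choose_symm (by omega : j + 1 ≤ r + 1)]
      congr 1
      omega
    have h3 : (2 * r + 1 + (s - j)).choose (s - j)
        = (r + s + 1 + (r - j)).choose (2 * r + 1) := by
      have hs := Nat.choose_symm (by omega : 2 * r + 1 ≤ 2 * r + 1 + (s - j))
      rw [show 2 * r + 1 + (s - j) - (2 * r + 1) = s - j by omega] at hs
      rw [hs]
      congr 1
      omega
    rw [h1, h2, h3]
  · have c1 : (r + s + 1).choose r = (r + s + 1).choose (s + 1) := by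
      rw [← Nat.choose_symm (by omega : r ≤ r + s + 1)]
      congr 1
      omega
    have c2 : (r + s + 1).choose (r + 1) = (r + s + 1).choose s := by
      rw [← Nat.choose_symm (by omega : r + 1 ≤ r + s + 1)]
      congr 1
      omega
    rw [c1, c2, mul_comm]

noncomputable def Jser (d : ℕ) : PowerSeries ℤ :=
  PowerSeries.mk fun n => if 2 ∣ n then ((d + n / 2).choose (n / 2) : ℤ) else 0

lemma coeff_one_sub_X_sq_mul (f : PowerSeries ℤ) (n : ℕ) :
    (PowerSeries.coeff n) ((1 - PowerSeries.X ^ 2) * f)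
      = PowerSeries.coeff n f
        - (if 2 ≤ n then PowerSeries.coeff (n - 2) f else 0) := by
  rw [sub_mul, one_mul, map_sub, PowerSeries.coeff_X_pow_mul' f 2 n]

lemma Jser_step (d : ℕ) : (1 - PowerSeries.X ^ 2) * Jser (d + 1) = Jser d := by
  ext n
  rw [coeff_one_sub_X_sq_mul]
  simp only [Jser, PowerSeries.coeff_mk]
  rcases Nat.even_or_odd n with ⟨m, hm⟩ | ⟨m, hm⟩
  · subst hm
    rw [if_pos ⟨m, by omega⟩]
    rcases Nat.eq_zero_or_pos m with rfl | hmpos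
    · norm_num
    · rw [if_pos (by omega : 2 ≤ m + m), if_pos (show 2 ∣ m + m - 2 from ⟨m - 1, by omega⟩),
        if_pos (show 2 ∣ m + m from ⟨m, by omega⟩)]
      rw [show (m + m) / 2 = m by omega, show (m + m - 2) / 2 = m - 1 by omega]
      obtain ⟨m', rfl⟩ : ∃ m', m = m' + 1 := ⟨m - 1, by omega⟩
      rw [show m' + 1 - 1 = m' by omega]
      rw [show d + 1 + (m' + 1) = (d + 1 + m') + 1 by omega, Nat.choose_succ_succ]
      push_cast [show d + 1 + m' = d + (m' + 1) by omega]
      ring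
  · subst hm
    have h1 : ¬ 2 ∣ 2 * m + 1 := by omega
    simp only [h1, if_false]
    split_ifs with h2 h3
    · exfalso; omega
    · ring
    · ring

lemma Jser_unit (d : ℕ) : (1 - PowerSeries.X ^ 2) ^ (d + 1) * Jser d = 1 := by
  induction d with
  | zero =>
    rw [pow_one]
    ext n
    rw [coeff_one_sub_X_sq_mul]
    simp only [Jser, PowerSeries.coeff_mk, Nat.zero_add, Nat.choose_self, Nat.cast_one]
    rcases Nat.even_or_odd n with ⟨m, hm⟩ | ⟨m, hm⟩
    · subst hm
      rcases Nat.eq_zero_or_pos m with rfl | hmpos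
      · simp
      · rw [if_pos ⟨m, by omega⟩, if_pos (by omega : 2 ≤ m + m),
          if_pos (show 2 ∣ m + m - 2 from ⟨m - 1, by omega⟩)]
        rw [PowerSeries.coeff_one, if_neg (by omega)]
        ring
    · subst hm
      have h1 : ¬ 2 ∣ 2 * m + 1 := by omega
      rw [PowerSeries.coeff_one, if_neg (by omega : ¬ (2 * m + 1 = 0))]
      simp only [h1, if_false]
      split_ifs with h2 h3
      · exfalso; omega
      · ring
      · ring
  | succ d ih =>
    have hre : (1 - PowerSeries.X ^ 2) ^ (d + 1 + 1) * Jser (d + 1)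
        = (1 - PowerSeries.X ^ 2) ^ (d + 1) * ((1 - PowerSeries.X ^ 2) * Jser (d + 1)) := by
      ring
    rw [hre, Jser_step d, ih]

lemma sum_even_filter (g : ℕ → ℤ) (N : ℕ) :
    ∑ i ∈ range N, (if 2 ∣ i then g (i / 2) else 0) = ∑ i ∈ range ((N + 1) / 2), g i := by
  induction N with
  | zero => simp
  | succ N ih =>
    rw [Finset.sum_range_succ, ih]
    rcases Nat.even_or_odd N with ⟨m, hm⟩ | ⟨m, hm⟩
    · subst hm
      rw [if_pos ⟨m, by omega⟩, show (m + m + 1 + 1) / 2 = (m + m + 1) / 2 + 1 by omega,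
        Finset.sum_range_succ, show (m + m + 1) / 2 = m by omega, show (m + m) / 2 = m by omega]
    · subst hm
      rw [if_neg (by omega), add_zero, show (2 * m + 1 + 1 + 1) / 2 = (2 * m + 1 + 1) / 2 by omega]

/-- the polynomial right-hand side as a `mk` -/
lemma rhs_eq_mk (r : ℕ) (a : ℕ → ℤ)
    (hbe : ∀ k, a (2 * k) = (r.choose k : ℤ) * ((r + 1).choose k : ℤ))
    (hbo : ∀ k, a (2 * k + 1) = (r.choose k : ℤ) * ((r + 1).choose (k + 1) : ℤ)) :
    (∑ k ∈ Finset.range (2 * r + 2), PowerSeries.C ((-1) ^ k * a k) * PowerSeries.X ^ k)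
      = PowerSeries.mk (fun n => (-1) ^ n * a n) := by
  ext n
  rw [PowerSeries.coeff_mk, map_sum]
  simp only [PowerSeries.coeff_C_mul_X_pow]
  rw [Finset.sum_ite_eq (Finset.range (2 * r + 2)) n (fun k => (-1 : ℤ) ^ k * a k)]
  split_ifs with h
  · rfl
  · rw [Finset.mem_range, not_lt] at h
    rcases Nat.even_or_odd n with ⟨m, hm⟩ | ⟨m, hm⟩
    · rw [show n = 2 * m by omega, hbe m,
        Nat.choose_eq_zero_of_lt (show r < m by omega)]
      push_cast
      ring
    · rw [show n = 2 * m + 1 by omega, hbo m,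
        Nat.choose_eq_zero_of_lt (show r < m by omega)]
      push_cast
      ring

lemma Gform0' (r s : ℕ) :
    ∑ i ∈ range (s + 1), (2 * r + 1 + i).choose i * (r.choose (s - i) * (r + 1).choose (s - i))
      = (r + s + 1).choose s * (r + s).choose s := by
  have hrefl := Finset.sum_range_reflect
    (fun j => r.choose j * (r + 1).choose j * (2 * r + 1 + (s - j)).choose (s - j)) (s + 1)
  rw [Gform0] at hrefl
  rw [← hrefl]
  refine Finset.sum_congr rfl fun i hi => ?_
  rw [mem_range] at hi
  rw [show s + 1 - 1 - i = s - i by omega, show s - (s - i) = i by omega]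
  ring

lemma Gform1' (r s : ℕ) :
    ∑ i ∈ range (s + 1),
        (2 * r + 1 + i).choose i * (r.choose (s - i) * (r + 1).choose (s - i + 1))
      = (r + s + 1).choose s * (r + s + 1).choose (s + 1) := by
  have hrefl := Finset.sum_range_reflect
    (fun j => r.choose j * (r + 1).choose (j + 1) * (2 * r + 1 + (s - j)).choose (s - j)) (s + 1)
  rw [Gform1] at hrefl
  rw [← hrefl]
  refine Finset.sum_congr rfl fun i hi => ?_
  rw [mem_range] at hi
  rw [show s + 1 - 1 - i = s - i by omega, show s - (s - i) = i by omega]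
  ring

lemma key (r : ℕ) (aTil : ℕ → ℤ)
    (hae : ∀ k, aTil (2 * k) = ((r + k + 1).choose k : ℤ) * ((r + k).choose k : ℤ))
    (hao : ∀ k, aTil (2 * k + 1)
        = ((r + k + 1).choose k : ℤ) * ((r + k + 1).choose (k + 1) : ℤ))
    (a : ℕ → ℤ)
    (hbe : ∀ k, a (2 * k) = (r.choose k : ℤ) * ((r + 1).choose k : ℤ))
    (hbo : ∀ k, a (2 * k + 1) = (r.choose k : ℤ) * ((r + 1).choose (k + 1) : ℤ)) :
    PowerSeries.mk (fun n => (-1) ^ n * aTil n)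
      = Jser (2 * r + 1) * PowerSeries.mk (fun n => (-1) ^ n * a n) := by
  ext n
  rw [PowerSeries.coeff_mk, PowerSeries.coeff_mul,
    Finset.Nat.sum_antidiagonal_eq_sum_range_succ_mk]
  simp only [Jser, PowerSeries.coeff_mk]
  have step : ∀ i ∈ range (n + 1),
      (if 2 ∣ i then ((2 * r + 1 + i / 2).choose (i / 2) : ℤ) else 0)
          * ((-1) ^ (n - i) * a (n - i))
      = (if 2 ∣ i then
          (fun i' => ((2 * r + 1 + i').choose i' : ℤ) * ((-1) ^ (n - 2 * i') * a (n - 2 * i')))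
            (i / 2)
        else 0) := by
    intro i _
    split_ifs with h
    · obtain ⟨m, rfl⟩ := h
      dsimp only
      rw [show 2 * m / 2 = m by omega]
    · rw [zero_mul]
  rw [Finset.sum_congr rfl step, sum_even_filter
    (fun i' => ((2 * r + 1 + i').choose i' : ℤ) * ((-1) ^ (n - 2 * i') * a (n - 2 * i')))
    (n + 1)]
  rcases Nat.even_or_odd n with ⟨s, hs⟩ | ⟨s, hs⟩
  · have hn : n = 2 * s := by omega
    subst hn
    rw [show (2 * s + 1 + 1) / 2 = s + 1 by omega]
    have hterm : ∀ i ∈ range (s + 1),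
        ((2 * r + 1 + i).choose i : ℤ) * ((-1) ^ (2 * s - 2 * i) * a (2 * s - 2 * i))
        = ((2 * r + 1 + i).choose i : ℤ)
            * ((r.choose (s - i) : ℤ) * ((r + 1).choose (s - i) : ℤ)) := by
      intro i hi
      rw [mem_range] at hi
      rw [show 2 * s - 2 * i = 2 * (s - i) by omega, hbe (s - i), pow_mul]
      norm_num
    rw [Finset.sum_congr rfl hterm, hae s, pow_mul]
    norm_num
    exact_mod_cast (Gform0' r s).symm
  · have hn : n = 2 * s + 1 := by omega
    subst hn
    rw [show (2 * s + 1 + 1 + 1) / 2 = s + 1 by omega]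
    have hterm : ∀ i ∈ range (s + 1),
        ((2 * r + 1 + i).choose i : ℤ) * ((-1) ^ (2 * s + 1 - 2 * i) * a (2 * s + 1 - 2 * i))
        = -(((2 * r + 1 + i).choose i : ℤ)
            * ((r.choose (s - i) : ℤ) * ((r + 1).choose (s - i + 1) : ℤ))) := by
      intro i hi
      rw [mem_range] at hi
      rw [show 2 * s + 1 - 2 * i = 2 * (s - i) + 1 by omega, hbo (s - i), pow_succ, pow_mul]
      norm_num
    rw [Finset.sum_congr rfl hterm, Finset.sum_neg_distrib, hao s, pow_succ, pow_mul]
    norm_num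
    exact_mod_cast (Gform1' r s).symm

/-- For every `r ≥ 0`, in `ℤ⟦t⟧`:
`(1 − t²)^{2(r+1)} · Σ_{k≥0} (−1)^k ã'_k t^k = Σ_{k=0}^{2r+1} (−1)^k a'_k t^k`,
where `ã'_{2k} = C(r+k+1,k)·C(r+k,k)`, `ã'_{2k+1} = C(r+k+1,k)·C(r+k+1,k+1)`,
`a'_{2k} = C(r,k)·C(r+1,k)`, `a'_{2k+1} = C(r,k)·C(r+1,k+1)`. -/
theorem hilbert_series_identity_primed (r : ℕ)
    (aTil : ℕ → ℤ)
    (hae : ∀ k, aTil (2 * k) = ((r + k + 1).choose k : ℤ) * ((r + k).choose k : ℤ))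
    (hao : ∀ k, aTil (2 * k + 1)
        = ((r + k + 1).choose k : ℤ) * ((r + k + 1).choose (k + 1) : ℤ))
    (a : ℕ → ℤ)
    (hbe : ∀ k, a (2 * k) = (r.choose k : ℤ) * ((r + 1).choose k : ℤ))
    (hbo : ∀ k, a (2 * k + 1) = (r.choose k : ℤ) * ((r + 1).choose (k + 1) : ℤ)) :
    (1 - PowerSeries.X ^ 2) ^ (2 * (r + 1)) *
        PowerSeries.mk (fun k => (-1) ^ k * aTil k)
      = ∑ k ∈ Finset.range (2 * r + 2),
          PowerSeries.C ((-1) ^ k * a k) * PowerSeries.X ^ k := by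
  rw [key r aTil hae hao a hbe hbo, rhs_eq_mk r a hbe hbo,
    show 2 * (r + 1) = 2 * r + 1 + 1 from by ring, ← mul_assoc,
    Jser_unit (2 * r + 1), one_mul]
end

section
/- For every integer r ≥ 0, the alternating sum Σ_{k=0}^{2r} (−1)^k a_k equals the r-th Catalan number c_r, where a_{2k} = C(r, k)² and a_{2k+1} = C(r, k)·C(r, k+1); equivalently, Σ_{k=0}^{r} C(r, k)² − Σ_{k=0}^{r−1} C(r, k)·C(r, k+1) = c_r. -/
open Finset

/-- Split an alternating sum over `range (2n+1)` by parity. -/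
lemma alt_split (a : ℕ → ℤ) (n : ℕ) :
    ∑ k ∈ Finset.range (2 * n + 1), (-1) ^ k * a k
      = (∑ j ∈ Finset.range (n + 1), a (2 * j))
        - ∑ j ∈ Finset.range n, a (2 * j + 1) := by
  induction n with
  | zero => simp
  | succ n ih =>
    have h : 2 * (n + 1) + 1 = (2 * n + 1) + 1 + 1 := by ring
    rw [h, Finset.sum_range_succ, Finset.sum_range_succ, ih,
      Finset.sum_range_succ (fun j => a (2 * j)) (n + 1),
      Finset.sum_range_succ (fun j => a (2 * j + 1)) n]
    have h1 : ((-1 : ℤ)) ^ (2 * n + 1) = -1 := Odd.neg_one_pow ⟨n, by ring⟩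
    have h2 : ((-1 : ℤ)) ^ (2 * n + 1 + 1) = 1 := Even.neg_one_pow ⟨n + 1, by ring⟩
    have h3 : 2 * n + 1 + 1 = 2 * (n + 1) := by ring
    rw [h1, h2, h3]
    ring

lemma sum_sq_choose (r : ℕ) :
    ∑ k ∈ Finset.range (r + 1), (r.choose k) ^ 2 = (2 * r).choose r := by
  have := Nat.add_choose_eq r r r
  rw [Finset.Nat.sum_antidiagonal_eq_sum_range_succ_mk] at this
  rw [two_mul, this]
  refine Finset.sum_congr rfl fun k hk => ?_
  rw [Finset.mem_range] at hk
  rw [Nat.choose_symm (by omega : k ≤ r)]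
  ring
  
lemma sum_choose_mul (r : ℕ) :
    ∑ k ∈ Finset.range r, (r.choose k) * (r.choose (k + 1)) = (2 * r).choose (r + 1) := by
  have := Nat.add_choose_eq r r (r + 1)
  rw [Finset.Nat.sum_antidiagonal_eq_sum_range_succ_mk] at this
  rw [two_mul, this]
  -- RHS: ∑_{i=0}^{r+1} C(r,i) C(r, r+1-i); the i = 0 term vanishes (C(r,r+1)=0)
  rw [Finset.sum_range_succ' _ (r + 1)]
  simp only [Nat.choose_zero_right, one_mul, Nat.sub_zero, Nat.choose_succ_self,
    Nat.add_zero]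
  rw [Finset.sum_range_succ]
  simp only [Nat.choose_succ_self, Nat.zero_mul, Nat.add_zero, Nat.mul_zero]
  refine Finset.sum_congr rfl fun k hk => ?_
  rw [Finset.mem_range] at hk
  have : r + 1 - (k + 1) = r - k := by omega
  rw [this, Nat.choose_symm (by omega : k ≤ r)]
  ring

lemma catalan_sub (r : ℕ) :
    (catalan r : ℤ) = ((2 * r).choose r : ℤ) - ((2 * r).choose (r + 1) : ℤ) := by
  have hc : ((r : ℤ) + 1) * (catalan r : ℤ) = ((2 * r).choose r : ℤ) := by
    have := succ_mul_catalan_eq_centralBinom r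
    have := congrArg (fun x : ℕ => (x : ℤ)) this
    simpa [Nat.centralBinom] using this
  have hr : ((2 * r).choose (r + 1) : ℤ) * ((r : ℤ) + 1)
      = ((2 * r).choose r : ℤ) * (r : ℤ) := by
    have := Nat.choose_succ_right_eq (2 * r) r
    have := congrArg (fun x : ℕ => (x : ℤ)) this
    simpa [two_mul, Nat.add_sub_cancel] using this
  have hpos : ((r : ℤ) + 1) ≠ 0 := by positivity
  have : ((r : ℤ) + 1) * (catalan r : ℤ)
      = ((r : ℤ) + 1) * (((2 * r).choose r : ℤ) - ((2 * r).choose (r + 1) : ℤ)) := by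
    rw [hc]; linarith [hr]
  exact mul_left_cancel₀ hpos this

/-- For every `r ≥ 0`, `Σ_{k=0}^{2r} (−1)^k a_k = c_r`, the
`r`-th Catalan number, where `a_{2k} = C(r,k)²` and `a_{2k+1} = C(r,k)·C(r,k+1)`;
equivalently `Σ_{k=0}^{r} C(r,k)² − Σ_{k=0}^{r−1} C(r,k)·C(r,k+1) = c_r`. -/
theorem alternating_sum_eq_catalan (r : ℕ)
    (a : ℕ → ℤ)
    (hbe : ∀ k, a (2 * k) = (r.choose k : ℤ) ^ 2)
    (hbo : ∀ k, a (2 * k + 1) = (r.choose k : ℤ) * (r.choose (k + 1) : ℤ)) :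
    (∑ k ∈ Finset.range (2 * r + 1), (-1) ^ k * a k = (catalan r : ℤ)) ∧
      ((∑ k ∈ Finset.range (r + 1), (r.choose k : ℤ) ^ 2)
          - ∑ k ∈ Finset.range r, (r.choose k : ℤ) * (r.choose (k + 1) : ℤ)
        = (catalan r : ℤ)) := by
  have h1 : (∑ k ∈ Finset.range (r + 1), (r.choose k : ℤ) ^ 2)
      = ((2 * r).choose r : ℤ) := by
    have := congrArg (fun x : ℕ => (x : ℤ)) (sum_sq_choose r)
    simpa using this
  have h2 : (∑ k ∈ Finset.range r, (r.choose k : ℤ) * (r.choose (k + 1) : ℤ))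
      = ((2 * r).choose (r + 1) : ℤ) := by
    have := congrArg (fun x : ℕ => (x : ℤ)) (sum_choose_mul r)
    simpa using this
  have key : (∑ k ∈ Finset.range (r + 1), (r.choose k : ℤ) ^ 2)
      - ∑ k ∈ Finset.range r, (r.choose k : ℤ) * (r.choose (k + 1) : ℤ)
      = (catalan r : ℤ) := by
    rw [h1, h2, catalan_sub]
  refine ⟨?_, key⟩
  rw [alt_split a r]
  simpa only [hbe, hbo] using key
end

section
/- For every integer r ≥ 0, the constant term (the coefficient of x⁰) of the Laurent polynomial (1 − x²)·(x + x⁻¹)^{2r} over ℤ equals the r-th Catalan number c_r. -/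
open LaurentPolynomial Finset in
lemma pow_apply_key (n k : ℕ) (hk : k ≤ n) :
    (((T 1 + T (-1)) ^ n : LaurentPolynomial ℤ)).coeff (2 * (k:ℤ) - n) = n.choose k := by
  rw [add_pow]
  simp only [T_pow, mul_one, ← T_add]
  rw [AddMonoidAlgebra.coeff_sum, Finset.sum_apply']
  simp_rw [← map_natCast (C : ℤ →+* ℤ[T;T⁻¹]), mul_comm (T _), ← single_eq_C_mul_T,
    AddMonoidAlgebra.coeff_single, Finsupp.single_apply]
  rw [Finset.sum_eq_single k]
  · rw [if_pos (by push_cast [Nat.cast_sub hk]; ring)]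
  · intro i hi hne
    rw [if_neg]
    simp only [Finset.mem_range] at hi
    intro h
    apply hne
    rw [Nat.cast_sub (by omega : i ≤ n)] at h
    omega
  · intro h
    exact absurd (Finset.mem_range.mpr (by omega)) h

open LaurentPolynomial in
/-- For every `r ≥ 0`, the constant term (coefficient of `x⁰`)
of the Laurent polynomial `(1 − x²)(x + x⁻¹)^{2r}` over `ℤ` is the `r`-th
Catalan number. -/
theorem constantTerm_eq_catalan (r : ℕ) :
    (((1 - T 2) * (T 1 + T (-1)) ^ (2 * r) : LaurentPolynomial ℤ)).coeff 0
      = (catalan r : ℤ) := by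
  rcases Nat.eq_zero_or_pos r with rfl | hr
  · rw [Nat.mul_zero, pow_zero, mul_one, AddMonoidAlgebra.coeff_sub, Finsupp.sub_apply, ← T_zero,
      T_apply, T_apply]
    norm_num
  · rw [sub_mul, one_mul, AddMonoidAlgebra.coeff_sub, Finsupp.sub_apply]
    have hT : ((T 2 * (T 1 + T (-1)) ^ (2*r) : ℤ[T;T⁻¹])).coeff 0
        = ((T 1 + T (-1) : ℤ[T;T⁻¹]) ^ (2*r)).coeff (-2) := by
      have := AddMonoidAlgebra.coeff_single_mul_apply (R := ℤ) (G := ℤ) (r := 1) (g := 2)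
        (x := (T 1 + T (-1)) ^ (2*r)) (h := 0)
      simpa using this
    rw [hT]
    have h0 : ((T 1 + T (-1) : ℤ[T;T⁻¹]) ^ (2*r)).coeff 0 = (2*r).choose r := by
      have := pow_apply_key (2*r) r (by omega)
      rw [show 2*(r:ℤ) - (2*r:ℕ) = 0 by push_cast; ring] at this
      exact this
    have h2 : ((T 1 + T (-1) : ℤ[T;T⁻¹]) ^ (2*r)).coeff (-2) = (2*r).choose (r-1) := by
      have := pow_apply_key (2*r) (r-1) (by omega)
      rw [show 2*((r-1:ℕ):ℤ) - (2*r:ℕ) = -2 by push_cast [Nat.cast_sub hr]; ring] at this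
      exact this
    rw [h0, h2]
    have hcb : (r+1) * catalan r = (2*r).choose r := by
      rw [← Nat.centralBinom, succ_mul_catalan_eq_centralBinom]
    have hch : (2*r).choose r * r = (2*r).choose (r-1) * (r+1) := by
      have := Nat.choose_succ_right_eq (2*r) (r-1)
      rw [Nat.sub_add_cancel hr] at this
      rw [this]
      congr 1
      omega
    have hne : ((r:ℤ)+1) ≠ 0 := by positivity
    apply mul_left_cancel₀ hne
    have hch' : ((2*r).choose r : ℤ) * r = (2*r).choose (r-1) * (r+1) := by exact_mod_cast hch
    have hcb' : ((r:ℤ)+1) * catalan r = (2*r).choose r := by exact_mod_cast hcb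
    rw [mul_sub, hcb']
    linarith
end

section
/- For every integer r ≥ 0, in the ring of Laurent polynomials in x over ℤ[t], the constant term in x (the coefficient of x⁰) of (1 − x²)·(1 + t x²)^r·(1 + t x⁻²)^r equals the polynomial Q_r(t) = Σ_{k=0}^{2r} (−1)^k a_k t^k, where a_{2k} = C(r, k)² and a_{2k+1} = C(r, k)·C(r, k+1). -/
open LaurentPolynomial Finset

lemma parity_split {M : Type*} [AddCommMonoid M] (g : ℕ → M) (s : ℕ) :
    ∑ k ∈ range (2*s+1), g k
      = (∑ i ∈ range (s+1), g (2*i)) + ∑ i ∈ range s, g (2*i+1) := by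
  induction s with
  | zero => simp
  | succ n ih =>
    have h : 2*(n+1)+1 = (2*n+1) + 1 + 1 := by omega
    rw [h, Finset.sum_range_succ, Finset.sum_range_succ, ih,
        Finset.sum_range_succ (n := n+1), Finset.sum_range_succ (n := n),
        show 2*n+1+1 = 2*(n+1) from by omega]
    rw [Finset.sum_range_succ]
    abel

lemma expand_pow (R : Type*) [CommRing R] (p : R) (n : ℤ) (r : ℕ) :
    (1 + C p * T n : LaurentPolynomial R)^r
      = ∑ i ∈ range (r+1), AddMonoidAlgebra.single (i*n) (p^i * r.choose i) := by
  rw [add_comm, add_pow]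
  refine Finset.sum_congr rfl fun i _ => ?_
  rw [one_pow, mul_one, mul_pow, ← map_pow, T_pow, single_eq_C_mul_T,
      map_mul, map_natCast]
  ring

open LaurentPolynomial in
/-- For every `r ≥ 0`, in the ring of Laurent polynomials in
`x` over `ℤ[t]`, the constant term in `x` of `(1 − x²)(1 + tx²)^r (1 + tx⁻²)^r`
equals `Q_r(t) = Σ_{k=0}^{2r} (−1)^k a_k t^k`, where `a_{2k} = C(r,k)²` and
`a_{2k+1} = C(r,k)·C(r,k+1)`. -/
theorem constantTerm_eq_Qr (r : ℕ)
    (a : ℕ → ℤ)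
    (hbe : ∀ k, a (2 * k) = (r.choose k : ℤ) ^ 2)
    (hbo : ∀ k, a (2 * k + 1) = (r.choose k : ℤ) * (r.choose (k + 1) : ℤ)) :
    (((1 - T 2) * (1 + C Polynomial.X * T 2) ^ r * (1 + C Polynomial.X * T (-2)) ^ r :
        LaurentPolynomial (Polynomial ℤ))).coeff 0
      = ∑ k ∈ Finset.range (2 * r + 1),
          Polynomial.C ((-1) ^ k * a k) * Polynomial.X ^ k := by
  have hT : (T 2 : LaurentPolynomial (Polynomial ℤ)) = AddMonoidAlgebra.single 2 1 := by
    rw [single_eq_C_mul_T]; simp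
  set c : ℕ → Polynomial ℤ := fun i => Polynomial.X ^ i * (r.choose i : Polynomial ℤ) with hc
  rw [expand_pow, expand_pow, mul_assoc, Finset.sum_mul_sum]
  rw [Finset.mul_sum]
  simp_rw [Finset.mul_sum, AddMonoidAlgebra.single_mul_single, sub_mul, one_mul, hT,
    AddMonoidAlgebra.single_mul_single, one_mul]
  rw [AddMonoidAlgebra.coeff_sum, Finset.sum_apply']
  have step1 : ∀ k ∈ Finset.range (r+1),
      (∑ x ∈ Finset.range (r+1),
        (AddMonoidAlgebra.single ((k:ℤ)*2 + (x:ℤ)*(-2)) (c k * c x)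
          - AddMonoidAlgebra.single (2 + ((k:ℤ)*2 + (x:ℤ)*(-2))) (c k * c x)
          : LaurentPolynomial (Polynomial ℤ))).coeff 0
      = c k * c k - c k * c (k+1) := by
    intro k hk
    rw [AddMonoidAlgebra.coeff_sum, Finset.sum_apply']
    have h2 : ∀ x ∈ Finset.range (r+1),
        ((AddMonoidAlgebra.single ((k:ℤ)*2 + (x:ℤ)*(-2)) (c k * c x)
          - AddMonoidAlgebra.single (2 + ((k:ℤ)*2 + (x:ℤ)*(-2))) (c k * c x)
          : LaurentPolynomial (Polynomial ℤ))).coeff 0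
        = (if x = k then c k * c x else 0) - (if x = k + 1 then c k * c x else 0) := by
      intro x hx
      rw [AddMonoidAlgebra.coeff_sub, Finsupp.sub_apply, AddMonoidAlgebra.coeff_single,
          AddMonoidAlgebra.coeff_single, Finsupp.single_apply, Finsupp.single_apply]
      congr 1
      · exact if_congr (by omega) rfl rfl
      · exact if_congr (by omega) rfl rfl
    rw [Finset.sum_congr rfl h2, Finset.sum_sub_distrib,
      Finset.sum_ite_eq' (Finset.range (r+1)) k (fun x => c k * c x),
      Finset.sum_ite_eq' (Finset.range (r+1)) (k+1) (fun x => c k * c x),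
      if_pos hk]
    congr 1
    by_cases hkr : k + 1 ∈ Finset.range (r+1)
    · rw [if_pos hkr]
    · rw [if_neg hkr]
      have : k = r := by simp at hk hkr; omega
      subst this
      simp [hc, Nat.choose_succ_self]
  rw [Finset.sum_congr rfl step1, Finset.sum_sub_distrib, parity_split,
    Finset.sum_range_succ (f := fun x => c x * c (x+1)),
    show c r * c (r+1) = 0 from by simp [hc, Nat.choose_succ_self],
    add_zero, sub_eq_add_neg, ← Finset.sum_neg_distrib]
  congr 1
  · refine Finset.sum_congr rfl fun m _ => ?_
    rw [hbe, hc]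
    simp only [map_mul, map_pow, map_natCast, map_neg, map_one, pow_mul, neg_one_sq, one_pow]
    ring
  · refine Finset.sum_congr rfl fun m _ => ?_
    rw [hbo, hc]
    simp only [map_mul, map_pow, map_natCast, map_neg, map_one, pow_mul, pow_succ,
      neg_one_sq, one_pow]
    ring
end

section
/- For every integer n ≥ 0, the constant term (the coefficient of x⁰) of the Laurent polynomial (1 − x²)·(1 + x² + x⁻²)^n over ℤ equals the n-th Riordan number R_n = Σ_{i=0}^{n} (−1)^{n−i} C(n, i) c_i, where c_i is the i-th Catalan number. -/
open LaurentPolynomial Finset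

lemma catalan_eq_choose_sub (i : ℕ) :
    (catalan i : ℤ) = ((2*i).choose i : ℤ) - ((2*i).choose (i+1) : ℤ) := by
  have h1 : ((i:ℤ)+1) * catalan i = ((2*i).choose i : ℤ) := by
    have := succ_mul_catalan_eq_centralBinom i
    rw [Nat.centralBinom] at this
    exact_mod_cast this
  have h2 : ((2*i).choose (i+1) : ℤ) * ((i:ℤ)+1) = ((2*i).choose i : ℤ) * i := by
    have := Nat.choose_succ_right_eq (2*i) i
    rw [show 2*i - i = i by omega] at this
    exact_mod_cast this
  have hne : ((i:ℤ)+1) ≠ 0 := by positivity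
  apply mul_left_cancel₀ hne
  rw [h1]; nlinarith [h1, h2]

lemma apply_TT_pow (m : ℕ) (c : ℤ) :
    (((T 1 + T (-1) : LaurentPolynomial ℤ)) ^ m).coeff c
      = ∑ k ∈ range (m+1), if 2*(k:ℤ) - m = c then (m.choose k : ℤ) else 0 := by
  rw [add_pow, AddMonoidAlgebra.coeff_sum, Finsupp.finset_sum_apply]
  refine Finset.sum_congr rfl fun k hk => ?_
  rw [mem_range] at hk
  have : (T 1 ^ k * T (-1) ^ (m - k) * (m.choose k : LaurentPolynomial ℤ))
      = (AddMonoidAlgebra.single (2*(k:ℤ) - m) ((m.choose k : ℤ)) : LaurentPolynomial ℤ) := by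
    rw [T_pow, T_pow, ← T_add, single_eq_C_mul_T]
    have hk' : ((m - k : ℕ) : ℤ) = (m : ℤ) - k := by omega
    rw [show ((k:ℤ)*1 + (m-k:ℕ)*(-1)) = 2*(k:ℤ) - m by rw [hk']; ring]
    rw [map_natCast (C : ℤ →+* LaurentPolynomial ℤ), mul_comm]
  rw [this, AddMonoidAlgebra.coeff_single, Finsupp.single_apply]

lemma key_coeff (i : ℕ) :
    ((1 - T 2) * (T 1 + T (-1)) ^ (2*i) : LaurentPolynomial ℤ).coeff 0 = (catalan i : ℤ) := by
  rw [sub_mul, one_mul, AddMonoidAlgebra.coeff_sub, Finsupp.sub_apply]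
  have hT : (T 2 : LaurentPolynomial ℤ) = AddMonoidAlgebra.single (2:ℤ) 1 := rfl
  rw [hT, AddMonoidAlgebra.coeff_single_mul_apply, one_mul]
  norm_num
  rw [apply_TT_pow, apply_TT_pow]
  rw [Finset.sum_eq_single i (fun b _ hb => by
        rw [if_neg]; push_cast; intro h; omega)
      (fun h => absurd (mem_range.2 (by omega)) h)]
  rw [if_pos (by push_cast; ring)]
  rcases Nat.eq_zero_or_pos i with rfl | hi
  · simp [catalan]
  · rw [Finset.sum_eq_single (i-1) (fun b _ hb => by
        rw [if_neg]; push_cast; intro h; omega)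
      (fun h => absurd (mem_range.2 (by omega)) h)]
    rw [if_pos (by push_cast; omega)]
    rw [catalan_eq_choose_sub]
    have : (2*i).choose (i-1) = (2*i).choose (i+1) := by
      rw [← Nat.choose_symm (by omega : i+1 ≤ 2*i), show 2*i - (i+1) = i - 1 by omega]
    rw [this]

open LaurentPolynomial in
/-- For every `n ≥ 0`, the constant term of the Laurent
polynomial `(1 − x²)(1 + x² + x⁻²)^n` over `ℤ` equals the `n`-th Riordan number
`R_n = Σ_{i=0}^n (−1)^{n−i} C(n,i) c_i`. -/
theorem constantTerm_eq_riordan (n : ℕ) :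
    (((1 - T 2) * (1 + T 2 + T (-2)) ^ n : LaurentPolynomial ℤ)).coeff 0
      = ∑ i ∈ Finset.range (n + 1), (-1) ^ (n - i) * (n.choose i : ℤ) * (catalan i : ℤ) := by
  have key : (1 + T 2 + T (-2) : LaurentPolynomial ℤ) = (T 1 + T (-1))^2 - 1 := by
    rw [add_sq]
    simp only [T_pow, mul_T_assoc]
    norm_num
    ring
  rw [key, sub_pow]
  simp only [one_pow, mul_one, Finset.mul_sum]
  rw [AddMonoidAlgebra.coeff_sum, Finsupp.finset_sum_apply]
  refine Finset.sum_congr rfl fun i hi => ?_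
  rw [mem_range] at hi
  have : ((1 - T 2) * ((-1) ^ (i + n) * ((T 1 + T (-1)) ^ 2) ^ i * (n.choose i : LaurentPolynomial ℤ)) : LaurentPolynomial ℤ)
      = ((-1:ℤ) ^ (n - i) * (n.choose i : ℤ)) • ((1 - T 2) * (T 1 + T (-1)) ^ (2*i)) := by
    rw [← pow_mul, zsmul_eq_mul]
    push_cast
    have hsgn : ((-1 : LaurentPolynomial ℤ)) ^ (i+n) = (-1) ^ (n-i) := by
      rw [show i + n = (n - i) + 2*i by omega, pow_add, pow_mul]
      norm_num
    rw [hsgn]; ring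
  rw [this, AddMonoidAlgebra.coeff_smul_apply, key_coeff, smul_eq_mul]
end
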